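/- arXiv:2508.07581 — 6 statements merged into one kernel-verified Lean document; each statement's English description precedes it below -/
import Mathlib

section
/- For every C¹ function f : ℝ^D → ℝ and every x ∈ ℝ^D, the response after τ steps is given in closed form by r_τ(f)(x) = Σ_{i=0}^{τ−1} ⟨∇(f ∘ F_{τ−1} ∘ ⋯ ∘ F_{i+1})(F^{i+1}(x)), χ_i(F^i(x))⟩, where for i = τ−1 the composition f ∘ F_{τ−1} ∘ ⋯ ∘ F_{i+1} is interpreted as f itself. -/
open scoped RealInnerProductSpace

/-- The perturbed composition `F^t_ε`: `F^0_ε = id`, `F^{t+1}_ε = (F_t + ε χ_t) ∘ F^t_ε`. -/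
noncomputable def perturbedIter (D : ℕ)
    (F χ : ℕ → EuclideanSpace ℝ (Fin D) → EuclideanSpace ℝ (Fin D)) (ε : ℝ) :
    ℕ → EuclideanSpace ℝ (Fin D) → EuclideanSpace ℝ (Fin D)
  | 0 => id
  | (t + 1) => (fun x => F t x + ε • χ t x) ∘ perturbedIter D F χ ε t

/-- The composition `F_{a+k-1} ∘ ⋯ ∘ F_a` (the identity when `k = 0`). -/
noncomputable def tailComp (D : ℕ)
    (F : ℕ → EuclideanSpace ℝ (Fin D) → EuclideanSpace ℝ (Fin D)) (a : ℕ) :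
    ℕ → EuclideanSpace ℝ (Fin D) → EuclideanSpace ℝ (Fin D)
  | 0 => id
  | (k + 1) => F (a + k) ∘ tailComp D F a k

section Aux

variable {D : ℕ} (F χ : ℕ → EuclideanSpace ℝ (Fin D) → EuclideanSpace ℝ (Fin D))

lemma tailComp_comp_apply (a k : ℕ) (y : EuclideanSpace ℝ (Fin D)) :
    tailComp D F a k (tailComp D F 0 a y) = tailComp D F 0 (a + k) y := by
  induction k with
  | zero => rfl
  | succ k ih =>
    show F (a + k) (tailComp D F a k (tailComp D F 0 a y))
        = F (0 + (a + k)) (tailComp D F 0 (a + k) y)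
    rw [ih, Nat.zero_add]

lemma perturbedIter_zero_eq (t : ℕ) :
    perturbedIter D F χ 0 t = tailComp D F 0 t := by
  induction t with
  | zero => rfl
  | succ t ih =>
    funext y
    show F t (perturbedIter D F χ 0 t y) + (0 : ℝ) • χ t (perturbedIter D F χ 0 t y)
        = F (0 + t) (tailComp D F 0 t y)
    rw [ih, zero_smul, add_zero, Nat.zero_add]

lemma tailComp_perturbedIter (a k t : ℕ) (h : a + k = t) (x : EuclideanSpace ℝ (Fin D)) :
    tailComp D F a k (perturbedIter D F χ 0 a x) = perturbedIter D F χ 0 t x := by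
  rw [perturbedIter_zero_eq F χ a, perturbedIter_zero_eq F χ t, tailComp_comp_apply, h]

lemma tailComp_contDiff {τ : ℕ} (hF : ∀ t < τ, ContDiff ℝ 1 (F t)) (a k : ℕ)
    (hk : a + k ≤ τ) : ContDiff ℝ 1 (tailComp D F a k) := by
  induction k with
  | zero => exact contDiff_id
  | succ k ih => exact (hF (a + k) (by omega)).comp (ih (by omega))

lemma perturbedIter_continuous {τ : ℕ} (hF : ∀ t < τ, ContDiff ℝ 1 (F t))
    (hχ : ∀ t < τ, Continuous (χ t)) (x : EuclideanSpace ℝ (Fin D)) (t : ℕ) (ht : t ≤ τ) :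
    Continuous (fun ε : ℝ => perturbedIter D F χ ε t x) := by
  induction t with
  | zero => exact continuous_const
  | succ t ih =>
    have h1 := ih (by omega)
    have : Continuous (fun ε : ℝ => F t (perturbedIter D F χ ε t x)
        + ε • χ t (perturbedIter D F χ ε t x)) :=
      ((hF t (by omega)).continuous.comp h1).add
        (continuous_id.smul ((hχ t (by omega)).comp h1))
    exact this

lemma hasDerivAt_id_smul {E : Type*} [NormedAddCommGroup E] [NormedSpace ℝ E]
    {c : ℝ → E} (hc : ContinuousAt c 0) :
    HasDerivAt (fun ε : ℝ => ε • c ε) (c 0) 0 := by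
  rw [hasDerivAt_iff_tendsto_slope]
  have heq : ∀ ε ∈ ({0}ᶜ : Set ℝ), c ε = slope (fun ε : ℝ => ε • c ε) 0 ε := by
    intro ε hε
    have hε' : (ε : ℝ) ≠ 0 := hε
    simp [slope_def_module, smul_smul, inv_mul_cancel₀ hε']
  exact Filter.Tendsto.congr'
    (Filter.eventually_iff_exists_mem.2 ⟨{0}ᶜ, self_mem_nhdsWithin, heq⟩)
    (hc.continuousWithinAt.tendsto)

end Aux

/-- For every C¹ function `f` and every `x`, the response after `τ` steps,
`r_τ(f)(x) := (d/dε)|₀ f(F^τ_ε(x))`, exists and equals the closed form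
`Σ_{i=0}^{τ-1} ⟨∇(f ∘ F_{τ-1} ∘ ⋯ ∘ F_{i+1})(F^{i+1}(x)), χ_i(F^i(x))⟩`
(with the composition interpreted as `f` itself when `i = τ-1`). -/
theorem statement2 (D τ : ℕ)
    (F χ : ℕ → EuclideanSpace ℝ (Fin D) → EuclideanSpace ℝ (Fin D))
    (hF : ∀ t < τ, ContDiff ℝ 1 (F t)) (hχ : ∀ t < τ, Continuous (χ t))
    (f : EuclideanSpace ℝ (Fin D) → ℝ) (hf : ContDiff ℝ 1 f)
    (x : EuclideanSpace ℝ (Fin D)) :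
    HasDerivAt (fun ε : ℝ => f (perturbedIter D F χ ε τ x))
      (∑ i ∈ Finset.range τ,
        ⟪gradient (f ∘ tailComp D F (i + 1) (τ - 1 - i)) (perturbedIter D F χ 0 (i + 1) x),
          χ i (perturbedIter D F χ 0 i x)⟫)
      0 := by
  classical
  -- the tangent vector of the curve `ε ↦ F^t_ε x` at `ε = 0`
  set v : ℕ → EuclideanSpace ℝ (Fin D) := fun t =>
    ∑ i ∈ Finset.range t,
      fderiv ℝ (tailComp D F (i + 1) (t - 1 - i)) (perturbedIter D F χ 0 (i + 1) x)
        (χ i (perturbedIter D F χ 0 i x)) with hv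
  have key : ∀ t, t ≤ τ →
      HasDerivAt (fun ε : ℝ => perturbedIter D F χ ε t x) (v t) 0 := by
    intro t
    induction t with
    | zero =>
      intro _
      simp only [hv, Finset.range_zero, Finset.sum_empty]
      exact hasDerivAt_const 0 x
    | succ t ih =>
      intro ht
      have ht' : t < τ := ht
      have hd := ih ht'.le
      have h1 : HasDerivAt (fun ε : ℝ => F t (perturbedIter D F χ ε t x))
          (fderiv ℝ (F t) (perturbedIter D F χ 0 t x) (v t)) 0 :=
        (((hF t ht').differentiable one_ne_zero _).hasFDerivAt).comp_hasDerivAt 0 hd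
      have h2 : HasDerivAt (fun ε : ℝ => ε • χ t (perturbedIter D F χ ε t x))
          (χ t (perturbedIter D F χ 0 t x)) 0 := by
        have hc : ContinuousAt (fun ε : ℝ => χ t (perturbedIter D F χ ε t x)) 0 :=
          ((hχ t ht').comp (perturbedIter_continuous F χ hF hχ x t ht'.le)).continuousAt
        exact hasDerivAt_id_smul hc
      have hsum : v (t + 1)
          = fderiv ℝ (F t) (perturbedIter D F χ 0 t x) (v t)
            + χ t (perturbedIter D F χ 0 t x) := by
        simp only [hv, Nat.add_sub_cancel]
        rw [Finset.sum_range_succ]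
        congr 1
        · refine Eq.trans (Finset.sum_congr rfl fun i hi => ?_) (map_sum _ _ _).symm
          have hi' : i < t := Finset.mem_range.1 hi
          have hcomp : tailComp D F (i + 1) (t - i)
              = F t ∘ tailComp D F (i + 1) (t - 1 - i) := by
            have h1' : t - i = (t - 1 - i) + 1 := by omega
            have h2' : (i + 1) + (t - 1 - i) = t := by omega
            rw [h1']
            show F ((i + 1) + (t - 1 - i)) ∘ tailComp D F (i + 1) (t - 1 - i)
                = F t ∘ tailComp D F (i + 1) (t - 1 - i)
            rw [h2']
          have hT : ContDiff ℝ 1 (tailComp D F (i + 1) (t - 1 - i)) :=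
            tailComp_contDiff F hF (i + 1) (t - 1 - i) (by omega)
          rw [hcomp, fderiv_comp _ ((hF t ht').differentiable one_ne_zero _)
              (hT.differentiable one_ne_zero _)]
          simp only [ContinuousLinearMap.coe_comp', Function.comp_apply]
          rw [tailComp_perturbedIter F χ (i + 1) (t - 1 - i) t (by omega) x]
        · rw [Nat.sub_self]
          show fderiv ℝ id (perturbedIter D F χ 0 (t + 1) x)
              (χ t (perturbedIter D F χ 0 t x)) = _
          rw [fderiv_id]
          rfl
      rw [hsum] at *
      exact h1.add h2
  have hmain := ((hf.differentiable one_ne_zero _).hasFDerivAt).comp_hasDerivAt 0 (key τ le_rfl)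
  have hval : fderiv ℝ f (perturbedIter D F χ 0 τ x) (v τ)
      = ∑ i ∈ Finset.range τ,
        ⟪gradient (f ∘ tailComp D F (i + 1) (τ - 1 - i)) (perturbedIter D F χ 0 (i + 1) x),
          χ i (perturbedIter D F χ 0 i x)⟫ := by
    rw [hv, map_sum]
    refine Finset.sum_congr rfl fun i hi => ?_
    have hi' : i < τ := Finset.mem_range.1 hi
    have hT : ContDiff ℝ 1 (tailComp D F (i + 1) (τ - 1 - i)) :=
      tailComp_contDiff F hF (i + 1) (τ - 1 - i) (by omega)
    rw [show gradient (f ∘ tailComp D F (i + 1) (τ - 1 - i)) (perturbedIter D F χ 0 (i + 1) x)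
        = (InnerProductSpace.toDual ℝ _).symm
            (fderiv ℝ (f ∘ tailComp D F (i + 1) (τ - 1 - i))
              (perturbedIter D F χ 0 (i + 1) x)) from rfl,
      InnerProductSpace.toDual_symm_apply,
      fderiv_comp _ (hf.differentiable one_ne_zero _) (hT.differentiable one_ne_zero _)]
    simp only [ContinuousLinearMap.coe_comp', Function.comp_apply]
    rw [tailComp_perturbedIter F χ (i + 1) (τ - 1 - i) τ (by omega) x]
  rw [hval] at hmain
  exact hmain
end

section
/- Let μ be a finite Borel measure on ℝ^D with compact support and let f : ℝ^D → ℝ be C¹. Then the statistical response exists: the map ε ↦ ∫ f(F^τ_ε(x)) dμ(x) is differentiable at ε = 0, and its derivative equals ∫ r_τ(f)(x) dμ(x) = Σ_{i=0}^{τ−1} ∫ ⟨∇(f ∘ F_{τ−1} ∘ ⋯ ∘ F_{i+1})(F^{i+1}(x)), χ_i(F^i(x))⟩ dμ(x). -/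
open scoped RealInnerProductSpace
open MeasureTheory
open Filter Metric

section Aux

variable {D : ℕ}

local notation "E" => EuclideanSpace ℝ (Fin D)

lemma perturbedIter_succ (F χ : ℕ → E → E) (ε : ℝ) (t : ℕ) (x : E) :
    perturbedIter D F χ ε (t + 1) x
      = F t (perturbedIter D F χ ε t x) + ε • χ t (perturbedIter D F χ ε t x) := rfl

lemma perturbedIter_zero_eps (F χ : ℕ → E → E) (t : ℕ) (x : E) :
    perturbedIter D F χ 0 (t + 1) x = F t (perturbedIter D F χ 0 t x) := by
  rw [perturbedIter_succ]; simp

lemma tailComp_succ_left (F : ℕ → E → E) (a : ℕ) :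
    ∀ k, tailComp D F a (k + 1) = tailComp D F (a + 1) k ∘ F a := by
  intro k
  induction k with
  | zero => funext x; simp [tailComp]
  | succ k ih =>
      funext x
      show F (a + (k+1)) (tailComp D F a (k+1) x) = F ((a+1) + k) (tailComp D F (a+1) k (F a x))
      rw [ih]
      have h : a + (k+1) = (a+1) + k := by omega
      rw [h]
      rfl

lemma contDiff_tailComp (F : ℕ → E → E) (a : ℕ) :
    ∀ k, (∀ j, j < a + k → ContDiff ℝ 1 (F j)) → ContDiff ℝ 1 (tailComp D F a k) := by
  intro k
  induction k with
  | zero => intro _; exact contDiff_id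
  | succ k ih =>
      intro h
      exact (h (a + k) (by omega)).comp (ih (fun j hj => h j (by omega)))

lemma continuous_perturbedIter (F χ : ℕ → E → E) (ε : ℝ) :
    ∀ t, (∀ s, s < t → Continuous (F s)) → (∀ s, s < t → Continuous (χ s)) →
      Continuous (perturbedIter D F χ ε t) := by
  intro t
  induction t with
  | zero => intro _ _; exact continuous_id
  | succ t ih =>
      intro hF hχ
      have h1 := ih (fun s hs => hF s (by omega)) (fun s hs => hχ s (by omega))
      exact ((hF t (by omega)).comp h1).add (((hχ t (by omega)).comp h1).const_smul ε)

lemma hasDerivAt_smul_continuousAt {G : Type*} [NormedAddCommGroup G] [NormedSpace ℝ G]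
    {c : ℝ → G} (hc : ContinuousAt c 0) :
    HasDerivAt (fun ε : ℝ => ε • c ε) (c 0) 0 := by
  rw [hasDerivAt_iff_tendsto_slope]
  have h1 : Filter.Tendsto c (nhdsWithin (0:ℝ) {(0:ℝ)}ᶜ) (nhds (c 0)) :=
    hc.tendsto.mono_left nhdsWithin_le_nhds
  refine h1.congr' ?_
  filter_upwards [self_mem_nhdsWithin] with ε hε
  have hε' : ε ≠ 0 := hε
  simp [slope_def_module, smul_smul, inv_mul_cancel₀ hε']

noncomputable def vAux (D : ℕ) (F χ : ℕ → EuclideanSpace ℝ (Fin D) → EuclideanSpace ℝ (Fin D))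
    (x : EuclideanSpace ℝ (Fin D)) : ℕ → EuclideanSpace ℝ (Fin D)
  | 0 => 0
  | (t + 1) => fderiv ℝ (F t) (perturbedIter D F χ 0 t x) (vAux D F χ x t)
      + χ t (perturbedIter D F χ 0 t x)

lemma hasDerivAt_perturbedIter (F χ : ℕ → E → E) (x : E) :
    ∀ t, (∀ s, s < t → ContDiff ℝ 1 (F s)) → (∀ s, s < t → Continuous (χ s)) →
      HasDerivAt (fun ε : ℝ => perturbedIter D F χ ε t x) (vAux D F χ x t) 0 := by
  intro t
  induction t with
  | zero =>
      intro _ _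
      simpa [perturbedIter, vAux] using hasDerivAt_const (0:ℝ) x
  | succ t ih =>
      intro hF hχ
      have IH := ih (fun s hs => hF s (by omega)) (fun s hs => hχ s (by omega))
      have h1 : HasDerivAt (fun ε : ℝ => F t (perturbedIter D F χ ε t x))
          (fderiv ℝ (F t) (perturbedIter D F χ 0 t x) (vAux D F χ x t)) 0 :=
        ((((hF t (by omega)).differentiable one_ne_zero)
          (perturbedIter D F χ 0 t x)).hasFDerivAt).comp_hasDerivAt 0 IH
      have h2 : HasDerivAt (fun ε : ℝ => ε • χ t (perturbedIter D F χ ε t x))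
          (χ t (perturbedIter D F χ 0 t x)) 0 :=
        hasDerivAt_smul_continuousAt
          (((hχ t (by omega)).continuousAt).comp IH.continuousAt)
      have := h1.add h2
      exact this

lemma inner_gradient_apply (g : E → ℝ) (y w : E) :
    ⟪gradient g y, w⟫ = fderiv ℝ g y w := by
  rw [gradient, InnerProductSpace.toDual_symm_apply]

lemma key_identity (F χ : ℕ → E → E) (f : E → ℝ) (hf : ContDiff ℝ 1 f) (x : E) (τ : ℕ)
    (hF : ∀ s, s < τ → ContDiff ℝ 1 (F s)) :
    ∀ t, t ≤ τ →
      fderiv ℝ (f ∘ tailComp D F t (τ - t)) (perturbedIter D F χ 0 t x) (vAux D F χ x t)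
        = ∑ i ∈ Finset.range t,
            fderiv ℝ (f ∘ tailComp D F (i + 1) (τ - 1 - i)) (perturbedIter D F χ 0 (i + 1) x)
              (χ i (perturbedIter D F χ 0 i x)) := by
  intro t
  induction t with
  | zero => intro _; simp [vAux]
  | succ t ih =>
      intro ht
      have ht' : t < τ := by omega
      have hIH := ih (by omega)
      set q := perturbedIter D F χ 0 t x with hq
      set g : E → ℝ := f ∘ tailComp D F (t + 1) (τ - 1 - t) with hg
      have hgC : ContDiff ℝ 1 g :=
        hf.comp (contDiff_tailComp F (t + 1) (τ - 1 - t) (fun j hj => hF j (by omega)))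
      have hsub : τ - t = (τ - 1 - t) + 1 := by omega
      have hcompeq : f ∘ tailComp D F t (τ - t) = g ∘ F t := by
        rw [hsub, tailComp_succ_left, hg, Function.comp_assoc]
      have hq1 : perturbedIter D F χ 0 (t + 1) x = F t q := perturbedIter_zero_eps F χ t x
      have hchain : fderiv ℝ (f ∘ tailComp D F t (τ - t)) q
          = (fderiv ℝ g (F t q)).comp (fderiv ℝ (F t) q) := by
        rw [hcompeq]
        exact fderiv_comp q ((hgC.differentiable one_ne_zero) (F t q))
          (((hF t ht').differentiable one_ne_zero) q)
      have hv : vAux D F χ x (t + 1) = fderiv ℝ (F t) q (vAux D F χ x t) + χ t q := rfl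
      rw [Finset.sum_range_succ, ← hIH, hchain]
      have : fderiv ℝ (f ∘ tailComp D F (t + 1) (τ - (t + 1))) (perturbedIter D F χ 0 (t + 1) x)
          (vAux D F χ x (t + 1))
          = fderiv ℝ g (F t q) (fderiv ℝ (F t) q (vAux D F χ x t)) + fderiv ℝ g (F t q) (χ t q) := by
        have hsub2 : τ - (t + 1) = τ - 1 - t := by omega
        rw [hsub2, ← hg, hq1, hv, map_add]
      rw [this, hq1]
      rfl

lemma keyBound (F χ : ℕ → E → E) (K : Set E) (hK : IsCompact K) :
    ∀ t, (∀ s, s < t → ContDiff ℝ 1 (F s)) → (∀ s, s < t → Continuous (χ s)) →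
      ∃ K' : Set E, IsCompact K' ∧ ∃ C : ℝ, 0 ≤ C ∧
        ∀ x ∈ K, ∀ ε : ℝ, |ε| ≤ 1 →
          perturbedIter D F χ ε t x ∈ K' ∧
          ‖perturbedIter D F χ ε t x - perturbedIter D F χ 0 t x‖ ≤ C * |ε| := by
  intro t
  induction t with
  | zero =>
      intro _ _
      exact ⟨K, hK, 0, le_rfl, fun x hx ε hε => ⟨hx, by simp [perturbedIter]⟩⟩
  | succ t ih =>
      intro hF hχ
      obtain ⟨K', hK', C, hC0, hmem⟩ :=
        ih (fun s hs => hF s (by omega)) (fun s hs => hχ s (by omega))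
      have hFt := hF t (by omega)
      have hχt := hχ t (by omega)
      -- new compact set
      set g : ℝ × E → E := fun p => F t p.2 + p.1 • χ t p.2 with hgdef
      have hgc : Continuous g := by
        exact ((hFt.continuous).comp continuous_snd).add
          (continuous_fst.smul ((hχt).comp continuous_snd))
      have hcomp2 : IsCompact ((Metric.closedBall (0:ℝ) 1 ×ˢ K').image g) :=
        ((isCompact_closedBall (0:ℝ) 1).prod hK').image hgc
      -- radius containing K'
      obtain ⟨R, hR⟩ := hK'.isBounded.subset_closedBall 0
      -- bound on fderiv of F t on closed ball
      obtain ⟨L, hL⟩ := (isCompact_closedBall (0:E) R).exists_bound_of_continuousOn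
        ((hFt.continuous_fderiv one_ne_zero).continuousOn)
      -- bound on χ t on K'
      obtain ⟨M, hM⟩ := hK'.exists_bound_of_continuousOn hχt.continuousOn
      have haball : ∀ y ∈ K', y ∈ Metric.closedBall (0:E) R := fun y hy => hR hy
      set L' := max L 0 with hL'
      set M' := max M 0 with hM'
      refine ⟨(Metric.closedBall (0:ℝ) 1 ×ˢ K').image g, hcomp2, L' * C + M', by positivity, ?_⟩
      intro x hx ε hε
      obtain ⟨ha, hab⟩ := hmem x hx ε hε
      obtain ⟨hb, -⟩ := hmem x hx 0 (by simp)
      set a := perturbedIter D F χ ε t x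
      set b := perturbedIter D F χ 0 t x
      constructor
      · refine ⟨(ε, a), ?_, rfl⟩
        exact Set.mk_mem_prod (by simpa [Metric.mem_closedBall, Real.dist_eq] using hε) ha
      · have hstep : perturbedIter D F χ ε (t+1) x - perturbedIter D F χ 0 (t+1) x
            = (F t a - F t b) + ε • χ t a := by
          rw [perturbedIter_succ, perturbedIter_zero_eps]
          abel
        have h1 : ‖F t a - F t b‖ ≤ L' * ‖a - b‖ := by
          refine Convex.norm_image_sub_le_of_norm_fderiv_le
            (fun y _ => (hFt.differentiable one_ne_zero) y)
            (fun y hy => le_trans (hL y hy) (le_max_left _ _))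
            (convex_closedBall 0 R) (haball b hb) (haball a ha)
        have h2 : ‖ε • χ t a‖ ≤ M' * |ε| := by
          rw [norm_smul, Real.norm_eq_abs, mul_comm]
          exact mul_le_mul_of_nonneg_right (le_trans (hM a ha) (le_max_left _ _)) (abs_nonneg ε)
        calc ‖perturbedIter D F χ ε (t+1) x - perturbedIter D F χ 0 (t+1) x‖
            ≤ ‖F t a - F t b‖ + ‖ε • χ t a‖ := by rw [hstep]; exact norm_add_le _ _
          _ ≤ L' * (C * |ε|) + M' * |ε| := by
              refine add_le_add (le_trans h1 ?_) h2
              exact mul_le_mul_of_nonneg_left hab (le_max_right _ _)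
          _ = (L' * C + M') * |ε| := by ring

lemma integrable_aux (μ : MeasureTheory.Measure E) [IsFiniteMeasure μ] {K : Set E}
    (hK : IsCompact K) (hK0 : μ Kᶜ = 0) {g : E → ℝ} (hg : Continuous g) :
    Integrable g μ := by
  have hae : ∀ᵐ x ∂μ, x ∈ K := by
    rw [MeasureTheory.ae_iff]
    simpa [Set.compl_def] using hK0
  rw [← MeasureTheory.Measure.restrict_eq_self_of_ae_mem hae]
  exact hg.continuousOn.integrableOn_compact hK

lemma pointwise_deriv (F χ : ℕ → E → E) (τ : ℕ)
    (hF : ∀ t, t < τ → ContDiff ℝ 1 (F t)) (hχ : ∀ t, t < τ → Continuous (χ t))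
    (f : E → ℝ) (hf : ContDiff ℝ 1 f) (x : E) :
    HasDerivAt (fun ε : ℝ => f (perturbedIter D F χ ε τ x))
      (∑ i ∈ Finset.range τ,
        ⟪gradient (f ∘ tailComp D F (i + 1) (τ - 1 - i)) (perturbedIter D F χ 0 (i + 1) x),
          χ i (perturbedIter D F χ 0 i x)⟫) 0 := by
  have h1 := hasDerivAt_perturbedIter F χ x τ hF hχ
  have h2 : HasDerivAt (fun ε : ℝ => f (perturbedIter D F χ ε τ x))
      (fderiv ℝ f (perturbedIter D F χ 0 τ x) (vAux D F χ x τ)) 0 :=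
    (((hf.differentiable one_ne_zero) _).hasFDerivAt).comp_hasDerivAt 0 h1
  have h3 := key_identity F χ f hf x τ hF τ le_rfl
  have h4 : f ∘ tailComp D F τ (τ - τ) = f := by rw [Nat.sub_self]; rfl
  rw [h4] at h3
  have h5 : (∑ i ∈ Finset.range τ,
        ⟪gradient (f ∘ tailComp D F (i + 1) (τ - 1 - i)) (perturbedIter D F χ 0 (i + 1) x),
          χ i (perturbedIter D F χ 0 i x)⟫)
      = fderiv ℝ f (perturbedIter D F χ 0 τ x) (vAux D F χ x τ) := by
    rw [h3]
    exact Finset.sum_congr rfl (fun i _ => inner_gradient_apply _ _ _)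
  rw [h5]; exact h2

lemma continuous_term (F χ : ℕ → E → E) (τ i : ℕ) (hi : i < τ)
    (hF : ∀ t, t < τ → ContDiff ℝ 1 (F t)) (hχ : ∀ t, t < τ → Continuous (χ t))
    (f : E → ℝ) (hf : ContDiff ℝ 1 f) :
    Continuous (fun x =>
      ⟪gradient (f ∘ tailComp D F (i + 1) (τ - 1 - i)) (perturbedIter D F χ 0 (i + 1) x),
        χ i (perturbedIter D F χ 0 i x)⟫) := by
  have hg : ContDiff ℝ 1 (f ∘ tailComp D F (i + 1) (τ - 1 - i)) :=
    hf.comp (contDiff_tailComp F (i + 1) (τ - 1 - i) (fun j hj => hF j (by omega)))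
  have hgradeq : ∀ y : E, gradient (f ∘ tailComp D F (i + 1) (τ - 1 - i)) y
      = (InnerProductSpace.toDual ℝ _).symm (fderiv ℝ (f ∘ tailComp D F (i + 1) (τ - 1 - i)) y) :=
    fun y => rfl
  have hgrad : Continuous (fun y : E => gradient (f ∘ tailComp D F (i + 1) (τ - 1 - i)) y) := by
    simp only [hgradeq]
    exact (LinearIsometryEquiv.continuous _).comp (hg.continuous_fderiv one_ne_zero)
  have hc1 : Continuous (perturbedIter D F χ 0 (i + 1)) :=
    continuous_perturbedIter F χ 0 (i + 1)
      (fun s hs => (hF s (by omega)).continuous) (fun s hs => hχ s (by omega))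
  have hc0 : Continuous (perturbedIter D F χ 0 i) :=
    continuous_perturbedIter F χ 0 i
      (fun s hs => (hF s (by omega)).continuous) (fun s hs => hχ s (by omega))
  exact (hgrad.comp hc1).inner ((hχ i hi).comp hc0)

end Aux


/-- For a finite compactly supported Borel measure `μ` and a C¹ function `f`,
the statistical response exists: `ε ↦ ∫ f(F^τ_ε(x)) dμ(x)` is differentiable at `ε = 0` with
derivative `∫ r_τ(f) dμ = Σ_{i=0}^{τ-1} ∫ ⟨∇(f ∘ F_{τ-1} ∘ ⋯ ∘ F_{i+1})(F^{i+1}(x)),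
χ_i(F^i(x))⟩ dμ(x)`. -/
theorem statement3 (D τ : ℕ)
    (F χ : ℕ → EuclideanSpace ℝ (Fin D) → EuclideanSpace ℝ (Fin D))
    (hF : ∀ t < τ, ContDiff ℝ 1 (F t)) (hχ : ∀ t < τ, Continuous (χ t))
    (μ : Measure (EuclideanSpace ℝ (Fin D))) [IsFiniteMeasure μ]
    (hμ : ∃ K : Set (EuclideanSpace ℝ (Fin D)), IsCompact K ∧ μ Kᶜ = 0)
    (f : EuclideanSpace ℝ (Fin D) → ℝ) (hf : ContDiff ℝ 1 f) :
    HasDerivAt (fun ε : ℝ => ∫ x, f (perturbedIter D F χ ε τ x) ∂μ)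
      (∫ x, (∑ i ∈ Finset.range τ,
        ⟪gradient (f ∘ tailComp D F (i + 1) (τ - 1 - i)) (perturbedIter D F χ 0 (i + 1) x),
          χ i (perturbedIter D F χ 0 i x)⟫) ∂μ)
      0 ∧
    (∫ x, (∑ i ∈ Finset.range τ,
        ⟪gradient (f ∘ tailComp D F (i + 1) (τ - 1 - i)) (perturbedIter D F χ 0 (i + 1) x),
          χ i (perturbedIter D F χ 0 i x)⟫) ∂μ)
      = ∑ i ∈ Finset.range τ, ∫ x,
          ⟪gradient (f ∘ tailComp D F (i + 1) (τ - 1 - i)) (perturbedIter D F χ 0 (i + 1) x),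
            χ i (perturbedIter D F χ 0 i x)⟫ ∂μ := by
  obtain ⟨K, hK, hK0⟩ := hμ
  have hae : ∀ᵐ x ∂μ, x ∈ K := by
    rw [MeasureTheory.ae_iff]
    simpa [Set.compl_def] using hK0
  have hpt := pointwise_deriv F χ τ hF hχ f hf
  have hcontε : ∀ ε : ℝ, Continuous (fun x => f (perturbedIter D F χ ε τ x)) := fun ε =>
    hf.continuous.comp (continuous_perturbedIter F χ ε τ (fun s hs => (hF s hs).continuous) hχ)
  have hintε : ∀ ε : ℝ, Integrable (fun x => f (perturbedIter D F χ ε τ x)) μ := fun ε =>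
    integrable_aux μ hK hK0 (hcontε ε)
  obtain ⟨K', hK', C, hC0, hbd⟩ := keyBound F χ K hK τ hF hχ
  obtain ⟨R, hR⟩ := hK'.isBounded.subset_closedBall 0
  obtain ⟨L, hL⟩ := (isCompact_closedBall (0 : EuclideanSpace ℝ (Fin D)) R).exists_bound_of_continuousOn
    ((hf.continuous_fderiv one_ne_zero).continuousOn)
  set L' := max L 0 with hL'def
  have hL'0 : 0 ≤ L' := le_max_right _ _
  constructor
  · rw [hasDerivAt_iff_tendsto_slope]
    have key : Filter.Tendsto
        (fun ε : ℝ => ∫ x, slope (fun ε' : ℝ => f (perturbedIter D F χ ε' τ x)) 0 ε ∂μ)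
        (nhdsWithin 0 {(0:ℝ)}ᶜ)
        (nhds (∫ x, (∑ i ∈ Finset.range τ,
          ⟪gradient (f ∘ tailComp D F (i + 1) (τ - 1 - i)) (perturbedIter D F χ 0 (i + 1) x),
            χ i (perturbedIter D F χ 0 i x)⟫) ∂μ)) := by
      apply MeasureTheory.tendsto_integral_filter_of_dominated_convergence
        (bound := fun _ => L' * C)
      · apply Filter.Eventually.of_forall
        intro ε
        have heq : (fun x => slope (fun ε' : ℝ => f (perturbedIter D F χ ε' τ x)) 0 ε)
            = fun x => (ε - 0)⁻¹ • (f (perturbedIter D F χ ε τ x)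
                - f (perturbedIter D F χ 0 τ x)) := by
          funext x; rw [slope_def_module]
        rw [heq]
        exact (((hcontε ε).sub (hcontε 0)).const_smul ((ε - 0)⁻¹ : ℝ)).aestronglyMeasurable
      · have hev : ∀ᶠ ε in nhdsWithin (0:ℝ) {(0:ℝ)}ᶜ, |ε| ≤ 1 ∧ ε ≠ 0 := by
          have h1 : ∀ᶠ ε in nhds (0:ℝ), |ε| ≤ 1 := by
            have := Metric.closedBall_mem_nhds (0:ℝ) one_pos
            filter_upwards [this] with ε hε
            simpa [Real.dist_eq] using hε
          filter_upwards [h1.filter_mono nhdsWithin_le_nhds, self_mem_nhdsWithin] with ε h1 h2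
          exact ⟨h1, h2⟩
        filter_upwards [hev] with ε hε
        filter_upwards [hae] with x hx
        obtain ⟨hmemε, hdist⟩ := hbd x hx ε hε.1
        obtain ⟨hmem0, -⟩ := hbd x hx 0 (by simp)
        have hfdiff : ‖f (perturbedIter D F χ ε τ x) - f (perturbedIter D F χ 0 τ x)‖
            ≤ L' * (C * |ε|) := by
          have h6 := Convex.norm_image_sub_le_of_norm_fderiv_le
            (f := f) (C := L') (fun y _ => (hf.differentiable one_ne_zero) y)
            (fun y hy => le_trans (hL y hy) (le_max_left L 0))
            (convex_closedBall 0 R) (hR hmem0) (hR hmemε)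
          exact le_trans h6 (mul_le_mul_of_nonneg_left hdist hL'0)
        rw [slope_def_module, norm_smul]
        have hεne : |ε| ≠ 0 := abs_ne_zero.mpr hε.2
        calc ‖(ε - 0)⁻¹‖ * ‖f (perturbedIter D F χ ε τ x) - f (perturbedIter D F χ 0 τ x)‖
            ≤ |ε|⁻¹ * (L' * (C * |ε|)) := by
              rw [sub_zero, Real.norm_eq_abs, abs_inv]
              exact mul_le_mul_of_nonneg_left hfdiff (by positivity)
          _ = L' * C := by field_simp
      · exact MeasureTheory.integrable_const _
      · exact Filter.Eventually.of_forall fun x => (hasDerivAt_iff_tendsto_slope).mp (hpt x)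
    refine key.congr' ?_
    filter_upwards [self_mem_nhdsWithin] with ε hε
    simp only [slope_def_module]
    rw [← MeasureTheory.integral_sub (hintε ε) (hintε 0), ← MeasureTheory.integral_smul]
  · refine MeasureTheory.integral_finset_sum _ fun i hi => ?_
    exact integrable_aux μ hK hK0
      (continuous_term F χ τ i (Finset.mem_range.mp hi) hF hχ f hf)
end

section
/- Let F : ℝ^D → ℝ^D be a C² diffeomorphism, let ρ₀ : ℝ^D → ℝ be a nonnegative C¹ density with compact support, let χ : ℝ^D → ℝ^D be a C¹ vector field, and define the pushforward density ρ₁(y) := ρ₀(F⁻¹(y)) / |det DF(F⁻¹(y))| and the transported perturbation field χ̃ := χ ∘ F⁻¹. Then for every C¹ function f : ℝ^D → ℝ, the map ε ↦ ∫ f(F(x) + ε χ(x)) ρ₀(x) dx is differentiable at ε = 0 with derivative equal to −∫_{ℝ^D} f(y) div(ρ₁ χ̃)(y) dy; in particular, the first-order response of the predicted density has Lebesgue density −div(ρ₁ χ̃), which vanishes on any open set on which ρ₁ vanishes. -/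
open MeasureTheory

/-- The divergence `div V = Σ_j ∂_j V_j` of a vector field on `ℝ^D`. -/
noncomputable def divergence (D : ℕ)
    (V : EuclideanSpace ℝ (Fin D) → EuclideanSpace ℝ (Fin D))
    (x : EuclideanSpace ℝ (Fin D)) : ℝ :=
  ∑ j : Fin D, fderiv ℝ (fun y => V y j) x (EuclideanSpace.single j 1)

lemma contDiff_clm_det (D : ℕ) :
    ContDiff ℝ 1 (fun L : EuclideanSpace ℝ (Fin D) →L[ℝ] EuclideanSpace ℝ (Fin D) =>
      LinearMap.det (L : EuclideanSpace ℝ (Fin D) →ₗ[ℝ] EuclideanSpace ℝ (Fin D))) := by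
  classical
  set b := (EuclideanSpace.basisFun (Fin D) ℝ).toBasis with hb
  have h : ∀ L : EuclideanSpace ℝ (Fin D) →L[ℝ] EuclideanSpace ℝ (Fin D),
      LinearMap.det (L : EuclideanSpace ℝ (Fin D) →ₗ[ℝ] EuclideanSpace ℝ (Fin D)) =
      Matrix.det (LinearMap.toMatrix b b L) := fun L => (LinearMap.det_toMatrix b _).symm
  have h2 : ∀ (σ : Equiv.Perm (Fin D)) (i : Fin D)
      (L : EuclideanSpace ℝ (Fin D) →L[ℝ] EuclideanSpace ℝ (Fin D)),
      LinearMap.toMatrix b b (↑L) (σ i) i = L (EuclideanSpace.single i 1) (σ i) := by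
    intro σ i L
    simp [LinearMap.toMatrix_apply, hb, EuclideanSpace.basisFun_apply]
  simp_rw [h, Matrix.det_apply, h2]
  apply ContDiff.sum
  intro σ _
  simp_rw [Units.smul_def, zsmul_eq_mul]
  apply ContDiff.mul contDiff_const
  apply contDiff_prod
  intro i _
  exact ((EuclideanSpace.proj (σ i) : EuclideanSpace ℝ (Fin D) →L[ℝ] ℝ).comp
    (ContinuousLinearMap.apply ℝ (EuclideanSpace ℝ (Fin D)) (EuclideanSpace.single i (1:ℝ)))).contDiff

set_option maxHeartbeats 2000000 in
/-- Let `F` be a C² diffeomorphism of `ℝ^D` (with inverse `Finv`), `ρ₀` a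
nonnegative C¹ density with compact support, `χ` a C¹ vector field, and let
`ρ₁(y) = ρ₀(F⁻¹ y)/|det DF(F⁻¹ y)|` be the pushforward density and `χ̃ = χ ∘ F⁻¹` the
transported perturbation field. Then for every C¹ function `f`, the map
`ε ↦ ∫ f(F x + ε χ x) ρ₀(x) dx` is differentiable at `ε = 0` with derivative
`−∫ f(y) div(ρ₁ χ̃)(y) dy`; moreover `div(ρ₁ χ̃)` vanishes on any open set where `ρ₁` vanishes. -/
theorem statement5 (D : ℕ) (hD : 1 ≤ D)
    (F Finv : EuclideanSpace ℝ (Fin D) → EuclideanSpace ℝ (Fin D))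
    (hF : ContDiff ℝ 2 F) (hFinv : ContDiff ℝ 2 Finv)
    (hleft : ∀ x, Finv (F x) = x) (hright : ∀ y, F (Finv y) = y)
    (ρ₀ : EuclideanSpace ℝ (Fin D) → ℝ) (hρ₀pos : ∀ x, 0 ≤ ρ₀ x)
    (hρ₀ : ContDiff ℝ 1 ρ₀) (hρ₀supp : HasCompactSupport ρ₀)
    (χ : EuclideanSpace ℝ (Fin D) → EuclideanSpace ℝ (Fin D)) (hχ : ContDiff ℝ 1 χ)
    (ρ₁ : EuclideanSpace ℝ (Fin D) → ℝ)
    (hρ₁ : ∀ y, ρ₁ y =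
      ρ₀ (Finv y) / |LinearMap.det (fderiv ℝ F (Finv y) :
        EuclideanSpace ℝ (Fin D) →ₗ[ℝ] EuclideanSpace ℝ (Fin D))|)
    (f : EuclideanSpace ℝ (Fin D) → ℝ) (hf : ContDiff ℝ 1 f) :
    HasDerivAt (fun ε : ℝ => ∫ x, f (F x + ε • χ x) * ρ₀ x)
      (-∫ y, f y * divergence D (fun z => ρ₁ z • χ (Finv z)) y) 0 ∧
    ∀ U : Set (EuclideanSpace ℝ (Fin D)), IsOpen U → (∀ y ∈ U, ρ₁ y = 0) →
      ∀ y ∈ U, divergence D (fun z => ρ₁ z • χ (Finv z)) y = 0 := by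
  classical
  -- Part 2 first
  have part2 : ∀ U : Set (EuclideanSpace ℝ (Fin D)), IsOpen U → (∀ y ∈ U, ρ₁ y = 0) →
      ∀ y ∈ U, divergence D (fun z => ρ₁ z • χ (Finv z)) y = 0 := by
    intro U hU hUz y hy
    have hzero : (fun z => ρ₁ z • χ (Finv z)) =ᶠ[nhds y]
        (fun _ => (0 : EuclideanSpace ℝ (Fin D))) := by
      filter_upwards [hU.mem_nhds hy] with z hz
      simp [hUz z hz]
    unfold divergence
    refine Finset.sum_eq_zero fun j _ => ?_
    have hj : (fun z => (ρ₁ z • χ (Finv z)) j) =ᶠ[nhds y] (fun _ => (0 : ℝ)) := by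
      filter_upwards [hzero] with z hz
      rw [hz]
      rfl
    rw [hj.fderiv_eq]
    simp
  refine ⟨?_, part2⟩
  -- basic regularity facts
  have hFc : Continuous F := hF.continuous
  have hFinv1 : ContDiff ℝ 1 Finv := hFinv.of_le one_le_two
  have hFd : Differentiable ℝ F := hF.differentiable two_ne_zero
  have hfd : Differentiable ℝ f := hf.differentiable one_ne_zero
  set φ : EuclideanSpace ℝ (Fin D) → ℝ := fun x =>
    LinearMap.det (fderiv ℝ F x :
      EuclideanSpace ℝ (Fin D) →ₗ[ℝ] EuclideanSpace ℝ (Fin D)) with hφdef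
  -- determinant never vanishes
  have hφne : ∀ x, φ x ≠ 0 := by
    intro x
    have hcomp : (fderiv ℝ Finv (F x)).comp (fderiv ℝ F x) =
        ContinuousLinearMap.id ℝ (EuclideanSpace ℝ (Fin D)) := by
      have h1 : HasFDerivAt (Finv ∘ F) ((fderiv ℝ Finv (F x)).comp (fderiv ℝ F x)) x :=
        ((hFinv.differentiable two_ne_zero (F x)).hasFDerivAt).comp x (hFd x).hasFDerivAt
      have h2 : Finv ∘ F = id := funext hleft
      rw [h2] at h1
      exact (h1.unique (hasFDerivAt_id x))
    have hdet : LinearMap.det ((fderiv ℝ Finv (F x) :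
          EuclideanSpace ℝ (Fin D) →ₗ[ℝ] EuclideanSpace ℝ (Fin D)).comp
        (fderiv ℝ F x : EuclideanSpace ℝ (Fin D) →ₗ[ℝ] EuclideanSpace ℝ (Fin D))) = 1 := by
      rw [← ContinuousLinearMap.toLinearMap_comp, hcomp]
      simp
    rw [LinearMap.det_comp] at hdet
    intro h
    rw [hφdef] at h
    simp only at h
    rw [h, mul_zero] at hdet
    exact one_ne_zero hdet.symm
  have hφcont : ContDiff ℝ 1 φ := (contDiff_clm_det D).comp (hF.fderiv_right (le_refl 2))
  -- |φ| is C¹ since φ has constant sign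
  have hsign : (∀ x, 0 < φ x) ∨ (∀ x, φ x < 0) := by
    by_contra hc
    push_neg at hc
    obtain ⟨⟨a, ha⟩, ⟨b, hb⟩⟩ := hc
    have ha' : φ a < 0 := lt_of_le_of_ne ha (hφne a)
    have hb' : 0 < φ b := lt_of_le_of_ne hb (Ne.symm (hφne b))
    obtain ⟨x, hx⟩ := intermediate_value_univ a b hφcont.continuous
      (Set.mem_Icc.2 ⟨le_of_lt ha', le_of_lt hb'⟩)
    exact hφne x hx
  have habs : ContDiff ℝ 1 (fun x => |φ x|) := by
    rcases hsign with h | h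
    · have : (fun x => |φ x|) = φ := funext fun x => abs_of_pos (h x)
      rw [this]; exact hφcont
    · have : (fun x => |φ x|) = fun x => -φ x := funext fun x => abs_of_neg (h x)
      rw [this]; exact hφcont.neg
  have habspos : ∀ x, 0 < |φ x| := fun x => abs_pos.2 (hφne x)
  -- rewrite ρ₁
  have hρ₁eq : ρ₁ = fun y => ρ₀ (Finv y) / |φ (Finv y)| := funext hρ₁
  subst hρ₁eq
  set ρ₁ : EuclideanSpace ℝ (Fin D) → ℝ := fun y => ρ₀ (Finv y) / |φ (Finv y)| with hρ₁def
  have hρ₁C : ContDiff ℝ 1 ρ₁ :=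
    (hρ₀.comp hFinv1).div (habs.comp hFinv1) fun y => ne_of_gt (habspos (Finv y))
  -- compact supports
  let homeo : Homeomorph (EuclideanSpace ℝ (Fin D)) (EuclideanSpace ℝ (Fin D)) :=
    { toFun := F, invFun := Finv, left_inv := hleft, right_inv := hright,
      continuous_toFun := hFc, continuous_invFun := hFinv.continuous }
  have hρ₀Finv : HasCompactSupport (fun y => ρ₀ (Finv y)) :=
    hρ₀supp.comp_homeomorph homeo.symm
  have hρ₁supp : HasCompactSupport ρ₁ := by
    have : ρ₁ = (fun y => ρ₀ (Finv y)) * fun y => (|φ (Finv y)|)⁻¹ := by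
      funext y; simp [hρ₁def, div_eq_mul_inv]
    rw [this]
    exact hρ₀Finv.mul_right
  set W : EuclideanSpace ℝ (Fin D) → EuclideanSpace ℝ (Fin D) :=
    fun z => ρ₁ z • χ (Finv z) with hWdef
  have hWc : ContDiff ℝ 1 W := hρ₁C.smul (hχ.comp hFinv1)
  have hWsupp : HasCompactSupport W := hρ₁supp.smul_right
  have hWjc : ∀ j : Fin D, ContDiff ℝ 1 (fun y => W y j) := fun j =>
    (EuclideanSpace.proj j : EuclideanSpace ℝ (Fin D) →L[ℝ] ℝ).contDiff.comp hWc
  have hWjsupp : ∀ j : Fin D, HasCompactSupport (fun y => W y j) := fun j =>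
    HasCompactSupport.comp_left (g := fun v : EuclideanSpace ℝ (Fin D) => v j) hWsupp rfl
  -- basis decomposition
  have hdecomp : ∀ (L : EuclideanSpace ℝ (Fin D) →L[ℝ] ℝ) (v : EuclideanSpace ℝ (Fin D)),
      L v = ∑ j : Fin D, v j * L (EuclideanSpace.single j 1) := by
    intro L v
    have hv : v = ∑ j : Fin D, v j • EuclideanSpace.single j (1:ℝ) := by
      have hv0 := (EuclideanSpace.basisFun (Fin D) ℝ).sum_repr v
      simp only [EuclideanSpace.basisFun_apply, EuclideanSpace.basisFun_repr] at hv0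
      exact hv0.symm
    conv_lhs => rw [hv]
    rw [map_sum]
    simp [smul_eq_mul]
  -- continuity facts
  have hfderivf : Continuous (fun y => fderiv ℝ f y) := (hf.continuous_fderiv one_ne_zero)
  have hWjd : ∀ j : Fin D, Continuous (fun y => fderiv ℝ (fun z => W z j) y) := fun j =>
    ((hWjc j).continuous_fderiv one_ne_zero)
  -- integrability facts for IBP
  have hint1 : ∀ j : Fin D, Integrable
      (fun y => fderiv ℝ f y (EuclideanSpace.single j 1) * W y j) := by
    intro j
    apply Continuous.integrable_of_hasCompactSupport
    · exact (hfderivf.clm_apply continuous_const).mul (hWjc j).continuous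
    · exact ((hWjsupp j).mul_left)
  have hint2 : ∀ j : Fin D, Integrable
      (fun y => f y * fderiv ℝ (fun z => W z j) y (EuclideanSpace.single j 1)) := by
    intro j
    apply Continuous.integrable_of_hasCompactSupport
    · exact hf.continuous.mul ((hWjd j).clm_apply continuous_const)
    · exact ((hWjsupp j).fderiv_apply ℝ (EuclideanSpace.single j 1)).mul_left
  have hint3 : ∀ j : Fin D, Integrable (fun y => f y * W y j) := by
    intro j
    apply Continuous.integrable_of_hasCompactSupport
    · exact hf.continuous.mul (hWjc j).continuous
    · exact (hWjsupp j).mul_left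
  -- integration by parts
  have hIBP : ∀ j : Fin D,
      ∫ y, f y * fderiv ℝ (fun z => W z j) y (EuclideanSpace.single j 1) =
      -∫ y, fderiv ℝ f y (EuclideanSpace.single j 1) * W y j :=
    fun j => integral_mul_fderiv_eq_neg_fderiv_mul_of_integrable (hint1 j) (hint2 j) (hint3 j)
      (fun x _ => hfd x) (fun x _ => (hWjc j).differentiable one_ne_zero x)
  -- key identity: -∫ f * div W = ∫ (df)(W)
  have hkey : -∫ y, f y * divergence D W y = ∫ y, fderiv ℝ f y (W y) := by
    have h1 : ∫ y, f y * divergence D W y =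
        ∑ j : Fin D, ∫ y, f y * fderiv ℝ (fun z => W z j) y (EuclideanSpace.single j 1) := by
      unfold divergence
      simp_rw [Finset.mul_sum]
      exact integral_finset_sum _ fun j _ => hint2 j
    have h2 : ∫ y, fderiv ℝ f y (W y) =
        ∑ j : Fin D, ∫ y, fderiv ℝ f y (EuclideanSpace.single j 1) * W y j := by
      have : ∀ y, fderiv ℝ f y (W y) =
          ∑ j : Fin D, fderiv ℝ f y (EuclideanSpace.single j 1) * W y j := by
        intro y
        rw [hdecomp (fderiv ℝ f y) (W y)]
        congr 1; funext j; ring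
      simp_rw [this]
      exact integral_finset_sum _ fun j _ => hint1 j
    rw [h1, h2]
    rw [← Finset.sum_neg_distrib]
    congr 1
    funext j
    rw [hIBP j, neg_neg]
  -- pointwise rewriting of the integrand of ∫ (df)(W)
  have hWpt : ∀ y, fderiv ℝ f y (W y) = fderiv ℝ f y (χ (Finv y)) * ρ₁ y := by
    intro y
    rw [hWdef]
    simp only [ContinuousLinearMap.map_smul, smul_eq_mul]
    ring
  -- change of variables
  have hinj : Set.InjOn F Set.univ := (Function.LeftInverse.injective hleft).injOn
  have hsurj : F '' Set.univ = Set.univ := by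
    rw [Set.image_univ]
    exact Set.range_eq_univ.mpr fun y => ⟨Finv y, hright y⟩
  have hCOV := integral_image_eq_integral_abs_det_fderiv_smul (μ := volume) MeasurableSet.univ
    (fun x _ => (hFd x).hasFDerivAt.hasFDerivWithinAt) hinj
    (fun y => fderiv ℝ f y (χ (Finv y)) * ρ₁ y)
  rw [hsurj, Measure.restrict_univ] at hCOV
  have hCOV2 : ∫ y, fderiv ℝ f y (χ (Finv y)) * ρ₁ y =
      ∫ x, fderiv ℝ f (F x) (χ x) * ρ₀ x := by
    rw [hCOV]
    congr 1
    funext x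
    have h1 : Finv (F x) = x := hleft x
    have h2 : (fderiv ℝ F x).det = φ x := rfl
    rw [h1, h2, hρ₁def]
    simp only [h1, smul_eq_mul]
    have hne : |φ x| ≠ 0 := ne_of_gt (habspos x)
    field_simp
  -- identify the claimed derivative with ∫ fderiv f (F x) (χ x) * ρ₀ x
  have hfinal : -∫ y, f y * divergence D W y = ∫ x, fderiv ℝ f (F x) (χ x) * ρ₀ x := by
    rw [hkey]
    simp_rw [hWpt]
    exact hCOV2
  rw [hfinal]
  -- differentiation under the integral sign
  have hχc : Continuous χ := hχ.continuous
  have hKc : IsCompact ((fun p : ℝ × EuclideanSpace ℝ (Fin D) => F p.2 + p.1 • χ p.2) ''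
      (Set.Icc (-1 : ℝ) 1 ×ˢ tsupport ρ₀)) :=
    (isCompact_Icc.prod hρ₀supp).image (by fun_prop)
  obtain ⟨C₁, hC₁⟩ := hKc.exists_bound_of_continuousOn
    ((hf.continuous_fderiv one_ne_zero).continuousOn)
  obtain ⟨C₂, hC₂⟩ := hρ₀supp.exists_bound_of_continuousOn hχc.continuousOn
  set bound : EuclideanSpace ℝ (Fin D) → ℝ :=
    fun x => (max C₁ 0 * max C₂ 0) * ρ₀ x with hbounddef
  have hboundint : Integrable bound :=
    (hρ₀.continuous.integrable_of_hasCompactSupport hρ₀supp).const_mul _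
  have hdiff : ∀ (x : EuclideanSpace ℝ (Fin D)) (ε : ℝ),
      HasDerivAt (fun ε : ℝ => f (F x + ε • χ x) * ρ₀ x)
        (fderiv ℝ f (F x + ε • χ x) (χ x) * ρ₀ x) ε := by
    intro x ε
    have hin : HasDerivAt (fun ε : ℝ => F x + ε • χ x) (χ x) ε := by
      simpa using ((hasDerivAt_id ε).smul_const (χ x)).const_add (F x)
    exact ((hfd _).hasFDerivAt.comp_hasDerivAt ε hin).mul_const (ρ₀ x)
  have hbound : ∀ x : EuclideanSpace ℝ (Fin D), ∀ ε ∈ Metric.ball (0:ℝ) 1,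
      ‖fderiv ℝ f (F x + ε • χ x) (χ x) * ρ₀ x‖ ≤ bound x := by
    intro x ε hε
    by_cases hx : x ∈ tsupport ρ₀
    · have hmem : F x + ε • χ x ∈ (fun p : ℝ × EuclideanSpace ℝ (Fin D) =>
          F p.2 + p.1 • χ p.2) '' (Set.Icc (-1 : ℝ) 1 ×ˢ tsupport ρ₀) := by
        refine ⟨(ε, x), ⟨?_, hx⟩, rfl⟩
        rw [Metric.mem_ball, Real.dist_eq, sub_zero] at hε
        exact Set.mem_Icc.2 (abs_le.1 hε.le)
      have b1 : ‖fderiv ℝ f (F x + ε • χ x)‖ ≤ max C₁ 0 :=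
        le_trans (hC₁ _ hmem) (le_max_left _ _)
      have b2 : ‖χ x‖ ≤ max C₂ 0 := le_trans (hC₂ x hx) (le_max_left _ _)
      calc ‖fderiv ℝ f (F x + ε • χ x) (χ x) * ρ₀ x‖
          = ‖fderiv ℝ f (F x + ε • χ x) (χ x)‖ * ρ₀ x := by
            rw [norm_mul, Real.norm_of_nonneg (hρ₀pos x)]
        _ ≤ (‖fderiv ℝ f (F x + ε • χ x)‖ * ‖χ x‖) * ρ₀ x := by
            apply mul_le_mul_of_nonneg_right ((fderiv ℝ f (F x + ε • χ x)).le_opNorm (χ x))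
              (hρ₀pos x)
        _ ≤ (max C₁ 0 * max C₂ 0) * ρ₀ x := by
            apply mul_le_mul_of_nonneg_right _ (hρ₀pos x)
            exact mul_le_mul b1 b2 (norm_nonneg _) (le_max_right _ _)
    · have hz : ρ₀ x = 0 := image_eq_zero_of_notMem_tsupport hx
      rw [hbounddef]
      simp [hz]
  have hmeas : ∀ ε : ℝ, AEStronglyMeasurable
      (fun x => f (F x + ε • χ x) * ρ₀ x) volume := by
    intro ε
    exact ((hf.continuous.comp (show Continuous (fun x => F x + ε • χ x) by fun_prop)).mul
      hρ₀.continuous).aestronglyMeasurable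
  have hint0 : Integrable (fun x => f (F x + (0:ℝ) • χ x) * ρ₀ x) := by
    apply Continuous.integrable_of_hasCompactSupport
    · exact (hf.continuous.comp (show Continuous (fun x => F x + (0:ℝ) • χ x) by fun_prop)).mul hρ₀.continuous
    · exact hρ₀supp.mul_left
  have h'meas : AEStronglyMeasurable
      (fun x => fderiv ℝ f (F x + (0:ℝ) • χ x) (χ x) * ρ₀ x) volume := by
    apply Continuous.aestronglyMeasurable
    exact (((hf.continuous_fderiv one_ne_zero).comp
      (show Continuous (fun x => F x + (0:ℝ) • χ x) by fun_prop)).clm_apply hχc).mul hρ₀.continuous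
  have hder := hasDerivAt_integral_of_dominated_loc_of_deriv_le (μ := volume)
    (F := fun ε x => f (F x + ε • χ x) * ρ₀ x)
    (F' := fun ε x => fderiv ℝ f (F x + ε • χ x) (χ x) * ρ₀ x)
    (x₀ := 0) (bound := bound) (Metric.ball_mem_nhds 0 one_pos)
    (Filter.Eventually.of_forall hmeas) hint0 h'meas
    (Filter.Eventually.of_forall fun x ε hε => hbound x ε hε) hboundint
    (Filter.Eventually.of_forall fun x ε _ => hdiff x ε)
  have := hder.2
  simp only [zero_smul, add_zero] at this
  exact this
end

section
/- (Score transformation under a diffeomorphism.) Let F : ℝ^D → ℝ^D be a C² diffeomorphism and let ρ : ℝ^D → (0, ∞) be a positive C¹ density. Define the pushforward density ρ̃(y) := ρ(F⁻¹(y)) / |det DF(F⁻¹(y))|. Then ρ̃ is a positive C¹ function, and for every x ∈ ℝ^D the scores s := ∇ log ρ and s̃ := ∇ log ρ̃ satisfy DF(x)ᵀ · s̃(F(x)) = s(x) − w(x), where w(x) ∈ ℝ^D is the vector with components w(x)_j = tr( DF(x)⁻¹ · ∂_j DF(x) ). -/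
open Matrix

/-- The Jacobian matrix of `F : ℝ^D → ℝ^D` at `x`: entry `(i, j)` is `∂_j F_i (x)`. -/
noncomputable def jacMatrix (D : ℕ)
    (F : EuclideanSpace ℝ (Fin D) → EuclideanSpace ℝ (Fin D))
    (x : EuclideanSpace ℝ (Fin D)) : Matrix (Fin D) (Fin D) ℝ :=
  Matrix.of fun i j => fderiv ℝ (fun y => F y i) x (EuclideanSpace.single j 1)

/-- The entrywise partial derivative, in the `j`-th coordinate direction, of a matrix-valued
function on `ℝ^D`. -/
noncomputable def pderivMatrix (D : ℕ)
    (A : EuclideanSpace ℝ (Fin D) → Matrix (Fin D) (Fin D) ℝ) (j : Fin D)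
    (x : EuclideanSpace ℝ (Fin D)) : Matrix (Fin D) (Fin D) ℝ :=
  Matrix.of fun a b => fderiv ℝ (fun y => A y a b) x (EuclideanSpace.single j 1)

namespace Statement7Aux

variable {D : ℕ}

lemma euclid_decomp (v : EuclideanSpace ℝ (Fin D)) :
    v = ∑ j, v j • EuclideanSpace.single j 1 := by
  ext i
  rw [show ((∑ j, v j • EuclideanSpace.single j 1 : EuclideanSpace ℝ (Fin D)) i)
      = ∑ j, (v j • EuclideanSpace.single j 1 : EuclideanSpace ℝ (Fin D)) i from
    by rw [WithLp.ofLp_sum]; exact Finset.sum_apply i _ _]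
  simp [EuclideanSpace.single_apply]

lemma clm_eval_sum (L : EuclideanSpace ℝ (Fin D) →L[ℝ] ℝ) (v : EuclideanSpace ℝ (Fin D)) :
    L v = ∑ j, v j * L (EuclideanSpace.single j 1) := by
  conv_lhs => rw [euclid_decomp v]
  rw [map_sum]
  simp [smul_eq_mul]

lemma clm_eval_sum' (L : EuclideanSpace ℝ (Fin D) →L[ℝ] EuclideanSpace ℝ (Fin D))
    (v : EuclideanSpace ℝ (Fin D)) (i : Fin D) :
    L v i = ∑ j, v j * L (EuclideanSpace.single j 1) i := by
  conv_lhs => rw [euclid_decomp v]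
  rw [map_sum]
  rw [show ((∑ j, L (v j • EuclideanSpace.single j 1) : EuclideanSpace ℝ (Fin D)) i)
      = ∑ j, (L (v j • EuclideanSpace.single j 1) : EuclideanSpace ℝ (Fin D)) i from
    by rw [WithLp.ofLp_sum]; exact Finset.sum_apply i _ _]
  simp [smul_eq_mul]

lemma jac_entry {F : EuclideanSpace ℝ (Fin D) → EuclideanSpace ℝ (Fin D)}
    {L : EuclideanSpace ℝ (Fin D) →L[ℝ] EuclideanSpace ℝ (Fin D)}
    {x : EuclideanSpace ℝ (Fin D)} (hL : HasFDerivAt F L x) (i j : Fin D) :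
    jacMatrix D F x i j = L (EuclideanSpace.single j 1) i := by
  have h : HasFDerivAt (fun y => F y i) ((EuclideanSpace.proj (𝕜 := ℝ) i).comp L) x :=
    (EuclideanSpace.proj (𝕜 := ℝ) i).hasFDerivAt.comp x hL
  simp only [jacMatrix, Matrix.of_apply, h.fderiv]
  rfl

lemma gradient_component (f : EuclideanSpace ℝ (Fin D) → ℝ) (x : EuclideanSpace ℝ (Fin D))
    (i : Fin D) :
    gradient f x i = fderiv ℝ f x (EuclideanSpace.single i 1) := by
  have h := @InnerProductSpace.toDual_symm_apply ℝ _ _ _ _ _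
      (EuclideanSpace.single i 1) (fderiv ℝ f x)
  rw [gradient, ← h, EuclideanSpace.inner_single_right]
  simp

/-- determinant as a continuous multilinear map on the rows -/
noncomputable def detCM (D : ℕ) :
    ContinuousMultilinearMap ℝ (fun _ : Fin D => (Fin D → ℝ)) ℝ where
  toMultilinearMap := (Matrix.detRowAlternating (n := Fin D) (R := ℝ)).toMultilinearMap
  cont := by
    have : Continuous fun m : Fin D → Fin D → ℝ => (Matrix.of m).det :=
      Continuous.matrix_det continuous_id
    exact this

lemma detCM_apply (m : Fin D → Fin D → ℝ) : detCM D m = (Matrix.of m).det := rfl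

lemma sum_det_updateRow (A H : Matrix (Fin D) (Fin D) ℝ) :
    ∑ i, (A.updateRow i (H i)).det = Matrix.trace (A.adjugate * H) := by
  have hrow : ∀ (i : Fin D) (b : Fin D → ℝ),
      (A.updateRow i b).det = ∑ k, A.adjugate k i * b k := by
    intro i b
    have h1 : A.updateRow i b = (Aᵀ.updateCol i b)ᵀ := by
      have := Matrix.updateRow_transpose (M := Aᵀ) (j := i) (c := b)
      rw [Matrix.transpose_transpose] at this
      rw [this]
    rw [h1, Matrix.det_transpose, ← Matrix.cramer_apply,
      Matrix.cramer_eq_adjugate_mulVec, Matrix.mulVec, dotProduct]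
    rw [← Matrix.adjugate_transpose]
    simp [Matrix.transpose_apply]
  calc ∑ i, (A.updateRow i (H i)).det = ∑ i, ∑ k, A.adjugate k i * H i k := by
        simp [hrow]
    _ = ∑ k, ∑ i, A.adjugate k i * H i k := Finset.sum_comm
    _ = Matrix.trace (A.adjugate * H) := by
        simp [Matrix.trace, Matrix.diag, Matrix.mul_apply]

lemma det_jac_hasFDerivAt {A : EuclideanSpace ℝ (Fin D) → Matrix (Fin D) (Fin D) ℝ}
    {A' : Fin D → Fin D → (EuclideanSpace ℝ (Fin D) →L[ℝ] ℝ)} {x : EuclideanSpace ℝ (Fin D)}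
    (h : ∀ a b, HasFDerivAt (fun y => A y a b) (A' a b) x) :
    HasFDerivAt (fun y => (A y).det)
      (((detCM D).linearDeriv (fun a b => A x a b)).comp
        (ContinuousLinearMap.pi fun a => ContinuousLinearMap.pi fun b => A' a b)) x := by
  have hΦ : HasFDerivAt (fun y => (fun a b => A y a b))
      (ContinuousLinearMap.pi fun a => ContinuousLinearMap.pi fun b => A' a b) x := by
    apply hasFDerivAt_pi''
    intro a
    rw [ContinuousLinearMap.proj_pi]
    apply hasFDerivAt_pi''
    intro b
    rw [ContinuousLinearMap.proj_pi]
    exact h a b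
  exact ((detCM D).hasFDerivAt (fun a b => A x a b)).comp x hΦ

lemma logdet_fderiv {A : EuclideanSpace ℝ (Fin D) → Matrix (Fin D) (Fin D) ℝ}
    {A' : Fin D → Fin D → (EuclideanSpace ℝ (Fin D) →L[ℝ] ℝ)} {x : EuclideanSpace ℝ (Fin D)}
    (h : ∀ a b, HasFDerivAt (fun y => A y a b) (A' a b) x) (hdet : (A x).det ≠ 0)
    (v : EuclideanSpace ℝ (Fin D)) :
    HasFDerivAt (fun y => Real.log ((A y).det))
      (((A x).det)⁻¹ • (((detCM D).linearDeriv (fun a b => A x a b)).comp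
        (ContinuousLinearMap.pi fun a => ContinuousLinearMap.pi fun b => A' a b))) x ∧
    (((A x).det)⁻¹ • (((detCM D).linearDeriv (fun a b => A x a b)).comp
        (ContinuousLinearMap.pi fun a => ContinuousLinearMap.pi fun b => A' a b))) v
      = Matrix.trace ((A x)⁻¹ * Matrix.of fun a b => A' a b v) := by
  have hd := det_jac_hasFDerivAt h
  constructor
  · exact (Real.hasDerivAt_log hdet).comp_hasFDerivAt x hd
  · have h1 : (((detCM D).linearDeriv (fun a b => A x a b)).comp
        (ContinuousLinearMap.pi fun a => ContinuousLinearMap.pi fun b => A' a b)) v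
        = ∑ a, ((A x).updateRow a (fun b => A' a b v)).det := by
      rw [ContinuousLinearMap.comp_apply, ContinuousMultilinearMap.linearDeriv_apply]
      apply Finset.sum_congr rfl
      intro a _
      rfl
    rw [ContinuousLinearMap.smul_apply, h1, show (∑ a, ((A x).updateRow a fun b => A' a b v).det) = Matrix.trace ((A x).adjugate * Matrix.of fun a b => A' a b v) from sum_det_updateRow _ _]
    rw [Matrix.inv_def, Ring.inverse_eq_inv, Matrix.smul_mul, Matrix.trace_smul]

lemma jac_entry_contDiff {F : EuclideanSpace ℝ (Fin D) → EuclideanSpace ℝ (Fin D)}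
    (hF : ContDiff ℝ 2 F) (i j : Fin D) :
    ContDiff ℝ 1 (fun x => jacMatrix D F x i j) := by
  have hFi : ContDiff ℝ 2 (fun y => F y i) :=
    (EuclideanSpace.proj (𝕜 := ℝ) i).contDiff.comp hF
  have h1 : ContDiff ℝ 1 (fderiv ℝ (fun y => F y i)) := hFi.fderiv_right (by norm_num)
  exact (ContinuousLinearMap.apply ℝ ℝ
    (EuclideanSpace.single j (1 : ℝ))).contDiff.comp h1

lemma det_jac_ne_zero {F Finv : EuclideanSpace ℝ (Fin D) → EuclideanSpace ℝ (Fin D)}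
    (hF : ContDiff ℝ 2 F) (hFinv : ContDiff ℝ 2 Finv)
    (hleft : ∀ x, Finv (F x) = x) (x : EuclideanSpace ℝ (Fin D)) :
    (jacMatrix D F x).det ≠ 0 := by
  have hFd : DifferentiableAt ℝ F x := (hF.differentiable (by norm_num)).differentiableAt
  have hGd : DifferentiableAt ℝ Finv (F x) := (hFinv.differentiable (by norm_num)).differentiableAt
  have hAf : HasFDerivAt F (fderiv ℝ F x) x := hFd.hasFDerivAt
  have hBf : HasFDerivAt Finv (fderiv ℝ Finv (F x)) (F x) := hGd.hasFDerivAt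
  set A := fderiv ℝ F x
  set B := fderiv ℝ Finv (F x)
  have hcomp : HasFDerivAt (fun z => Finv (F z)) (B.comp A) x := hBf.comp x hAf
  have heq : (fun z => Finv (F z)) = fun z => z := funext hleft
  rw [heq] at hcomp
  have hid : B.comp A = ContinuousLinearMap.id ℝ _ := hcomp.unique (hasFDerivAt_id x)
  set MB : Matrix (Fin D) (Fin D) ℝ :=
    Matrix.of fun i j => B (EuclideanSpace.single j 1) i with hMB
  have hmul : MB * jacMatrix D F x = 1 := by
    ext i j
    rw [Matrix.mul_apply]
    have h1 : (B.comp A) (EuclideanSpace.single j 1) i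
        = ∑ k, (A (EuclideanSpace.single j 1)) k * B (EuclideanSpace.single k 1) i := by
      rw [ContinuousLinearMap.comp_apply]; exact clm_eval_sum' B _ i
    rw [hid] at h1
    have h2 : ∑ k, MB i k * jacMatrix D F x k j
        = ∑ k, (A (EuclideanSpace.single j 1)) k * B (EuclideanSpace.single k 1) i := by
      apply Finset.sum_congr rfl
      intro k _
      rw [hMB, jac_entry hAf k j]
      simp [Matrix.of_apply, mul_comm]
    rw [h2, ← h1]
    simp [Matrix.one_apply, EuclideanSpace.single_apply, eq_comm]
  intro h0
  have hdet := congrArg Matrix.det hmul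
  rw [Matrix.det_mul, Matrix.det_one, h0, mul_zero] at hdet
  exact zero_ne_one hdet

end Statement7Aux

/-- **Score transformation under a diffeomorphism.** Let `F` be a C²
diffeomorphism of `ℝ^D` (with inverse `Finv`) and `ρ` a positive C¹ density. Then the
pushforward density `ρ̃(y) = ρ(F⁻¹ y)/|det DF(F⁻¹ y)|` is positive and C¹, and the scores
`s = ∇ log ρ`, `s̃ = ∇ log ρ̃` satisfy `DF(x)ᵀ s̃(F(x)) = s(x) − w(x)`, where
`w(x)_j = tr(DF(x)⁻¹ ∂_j DF(x))`. -/
theorem statement7 (D : ℕ) (hD : 1 ≤ D)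
    (F Finv : EuclideanSpace ℝ (Fin D) → EuclideanSpace ℝ (Fin D))
    (hF : ContDiff ℝ 2 F) (hFinv : ContDiff ℝ 2 Finv)
    (hleft : ∀ x, Finv (F x) = x) (hright : ∀ y, F (Finv y) = y)
    (ρ : EuclideanSpace ℝ (Fin D) → ℝ) (hρpos : ∀ x, 0 < ρ x) (hρ : ContDiff ℝ 1 ρ)
    (ρTilde : EuclideanSpace ℝ (Fin D) → ℝ)
    (hρTilde : ∀ y, ρTilde y = ρ (Finv y) / |(jacMatrix D F (Finv y)).det|) :
    (∀ y, 0 < ρTilde y) ∧ ContDiff ℝ 1 ρTilde ∧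
    ∀ x : EuclideanSpace ℝ (Fin D),
      Matrix.mulVec (jacMatrix D F x)ᵀ
          (fun i => gradient (fun y => Real.log (ρTilde y)) (F x) i)
        = fun j => gradient (fun y => Real.log (ρ y)) x j
            - Matrix.trace ((jacMatrix D F x)⁻¹ * pderivMatrix D (jacMatrix D F) j x) := by
  classical
  have hJne : ∀ x, (jacMatrix D F x).det ≠ 0 := Statement7Aux.det_jac_ne_zero hF hFinv hleft
  have hpos : ∀ y, 0 < ρTilde y := by
    intro y; rw [hρTilde]; exact div_pos (hρpos _) (abs_pos.2 (hJne _))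
  have hentry : ∀ a b, ContDiff ℝ 1 (fun x => jacMatrix D F x a b) :=
    fun a b => Statement7Aux.jac_entry_contDiff hF a b
  have hdetC : ContDiff ℝ 1 (fun x => (jacMatrix D F x).det) := by
    have hrows : ContDiff ℝ 1 (fun x => (fun a b => jacMatrix D F x a b)) :=
      contDiff_pi.2 fun a => contDiff_pi.2 fun b => hentry a b
    exact (Statement7Aux.detCM D).contDiff.comp hrows
  have ivt : ∀ a b : EuclideanSpace ℝ (Fin D),
      (jacMatrix D F a).det < 0 → 0 < (jacMatrix D F b).det → False := by
    intro a b ha hb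
    set φ : ℝ → ℝ := fun t => (jacMatrix D F (a + t • (b - a))).det with hφ
    have hcont : Continuous φ :=
      hdetC.continuous.comp (continuous_const.add (continuous_id.smul continuous_const))
    have h0 : φ 0 = (jacMatrix D F a).det := by simp [hφ]
    have h1 : φ 1 = (jacMatrix D F b).det := by simp [hφ]
    have hmem : (0 : ℝ) ∈ Set.Icc (φ 0) (φ 1) := by
      rw [h0, h1]; exact ⟨ha.le, hb.le⟩
    obtain ⟨t, -, ht⟩ := intermediate_value_Icc zero_le_one hcont.continuousOn hmem
    exact hJne _ ht
  have hsign : ∃ ε : ℝ, ε ≠ 0 ∧ ∀ x, |(jacMatrix D F x).det| = ε * (jacMatrix D F x).det := by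
    rcases em (∀ x, 0 < (jacMatrix D F x).det) with hp | hp
    · exact ⟨1, one_ne_zero, fun x => by rw [abs_of_pos (hp x), one_mul]⟩
    · push_neg at hp
      obtain ⟨x₁, hx₁⟩ := hp
      have hx₁' : (jacMatrix D F x₁).det < 0 := lt_of_le_of_ne hx₁ (hJne x₁)
      refine ⟨-1, by norm_num, fun x => ?_⟩
      have hx : (jacMatrix D F x).det < 0 := by
        rcases lt_or_gt_of_ne (hJne x) with h | h
        · exact h
        · exact absurd (ivt x₁ x hx₁' h) (fun hh => hh)
      rw [abs_of_neg hx, neg_one_mul]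
  obtain ⟨ε, hε, habs⟩ := hsign
  have hFinv1 : ContDiff ℝ 1 Finv := hFinv.of_le (by norm_num)
  have hC : ContDiff ℝ 1 ρTilde := by
    have hρT_eq : ρTilde = fun y => ρ (Finv y) / (ε * (jacMatrix D F (Finv y)).det) := by
      funext y; rw [hρTilde y, habs]
    rw [hρT_eq]
    exact (hρ.comp hFinv1).div (contDiff_const.mul (hdetC.comp hFinv1))
      (fun y => mul_ne_zero hε (hJne _))
  refine ⟨hpos, hC, ?_⟩
  intro x
  funext j
  have hFd : HasFDerivAt F (fderiv ℝ F x) x :=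
    ((hF.differentiable (by norm_num)) x).hasFDerivAt
  have hρT_diff : DifferentiableAt ℝ ρTilde (F x) := (hC.differentiable one_ne_zero) (F x)
  have hlogT : DifferentiableAt ℝ (fun y => Real.log (ρTilde y)) (F x) :=
    (Real.differentiableAt_log (hpos (F x)).ne').comp (F x) hρT_diff
  have hLtf : HasFDerivAt (fun y => Real.log (ρTilde y))
      (fderiv ℝ (fun y => Real.log (ρTilde y)) (F x)) (F x) := hlogT.hasFDerivAt
  have hchain : HasFDerivAt (fun z => Real.log (ρTilde (F z)))
      ((fderiv ℝ (fun y => Real.log (ρTilde y)) (F x)).comp (fderiv ℝ F x)) x :=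
    HasFDerivAt.comp x hLtf hFd
  have hfun : (fun z => Real.log (ρTilde (F z)))
      = fun z => Real.log (ρ z) - Real.log ((jacMatrix D F z).det) := by
    funext z
    rw [hρTilde (F z), hleft z, Real.log_div (hρpos z).ne' (abs_ne_zero.2 (hJne z)),
      Real.log_abs]
  have hlogρ : DifferentiableAt ℝ (fun z => Real.log (ρ z)) x :=
    (Real.differentiableAt_log (hρpos x).ne').comp x ((hρ.differentiable one_ne_zero) x)
  have hAentry : ∀ a b, HasFDerivAt (fun y => jacMatrix D F y a b)
      (fderiv ℝ (fun y => jacMatrix D F y a b) x) x :=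
    fun a b => (((hentry a b).differentiable one_ne_zero) x).hasFDerivAt
  obtain ⟨hld, hldval⟩ := Statement7Aux.logdet_fderiv (A := jacMatrix D F)
    (A' := fun a b => fderiv ℝ (fun y => jacMatrix D F y a b) x) hAentry (hJne x)
    (EuclideanSpace.single j 1)
  have hsum : HasFDerivAt (fun z => Real.log (ρ z) - Real.log ((jacMatrix D F z).det))
      (fderiv ℝ (fun z => Real.log (ρ z)) x
        - (((jacMatrix D F x).det)⁻¹ •
          (((Statement7Aux.detCM D).linearDeriv (fun a b => jacMatrix D F x a b)).comp
            (ContinuousLinearMap.pi fun a => ContinuousLinearMap.pi fun b =>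
              fderiv ℝ (fun y => jacMatrix D F y a b) x)))) x :=
    hlogρ.hasFDerivAt.sub hld
  have huniq : (fderiv ℝ (fun y => Real.log (ρTilde y)) (F x)).comp (fderiv ℝ F x)
      = fderiv ℝ (fun z => Real.log (ρ z)) x
        - (((jacMatrix D F x).det)⁻¹ •
          (((Statement7Aux.detCM D).linearDeriv (fun a b => jacMatrix D F x a b)).comp
            (ContinuousLinearMap.pi fun a => ContinuousLinearMap.pi fun b =>
              fderiv ℝ (fun y => jacMatrix D F y a b) x))) := by
    refine HasFDerivAt.unique ?_ hsum
    rw [← hfun]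
    exact hchain
  calc (jacMatrix D F x)ᵀ.mulVec (fun i => gradient (fun y => Real.log (ρTilde y)) (F x) i) j
      = ∑ i, jacMatrix D F x i j *
          fderiv ℝ (fun y => Real.log (ρTilde y)) (F x) (EuclideanSpace.single i 1) := by
        simp only [Matrix.mulVec, dotProduct, Matrix.transpose_apply]
        exact Finset.sum_congr rfl fun i _ => by
          rw [Statement7Aux.gradient_component]
    _ = (fderiv ℝ (fun y => Real.log (ρTilde y)) (F x)) (fderiv ℝ F x (EuclideanSpace.single j 1)) := by
        rw [Statement7Aux.clm_eval_sum _ (fderiv ℝ F x (EuclideanSpace.single j 1))]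
        exact Finset.sum_congr rfl fun i _ => by
          rw [← Statement7Aux.jac_entry hFd i j]
    _ = ((fderiv ℝ (fun y => Real.log (ρTilde y)) (F x)).comp (fderiv ℝ F x))
          (EuclideanSpace.single j 1) := rfl
    _ = fderiv ℝ (fun z => Real.log (ρ z)) x (EuclideanSpace.single j 1)
        - (((jacMatrix D F x).det)⁻¹ •
          (((Statement7Aux.detCM D).linearDeriv (fun a b => jacMatrix D F x a b)).comp
            (ContinuousLinearMap.pi fun a => ContinuousLinearMap.pi fun b =>
              fderiv ℝ (fun y => jacMatrix D F y a b) x)))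
            (EuclideanSpace.single j 1) := by
        rw [huniq]; rfl
    _ = gradient (fun y => Real.log (ρ y)) x j
        - Matrix.trace ((jacMatrix D F x)⁻¹ * pderivMatrix D (jacMatrix D F) j x) := by
        rw [Statement7Aux.gradient_component, hldval]
        rfl
end

section
/- (Score component recursion, equation (3).) Let F : ℝ^D → ℝ^D be a C² diffeomorphism, ρ : ℝ^D → (0, ∞) a positive C¹ density, and ρ̃(y) := ρ(F⁻¹(y)) / |det DF(F⁻¹(y))| the pushforward density, with scores s := ∇ log ρ, s̃ := ∇ log ρ̃ and correction vector w(x)_j := tr(DF(x)⁻¹ ∂_j DF(x)). Fix x ∈ ℝ^D, and suppose E, E′ are real D × d matrices and R is an invertible real d × d matrix such that DF(x) E = E′ R. Then the score components along these frames satisfy E′ᵀ s̃(F(x)) = R^{-T} Eᵀ ( s(x) − w(x) ). -/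
open Matrix

/-! ### Auxiliary lemmas -/

/-- The determinant, as a continuous multilinear map in the rows. -/
noncomputable def detCML (D : ℕ) : ContinuousMultilinearMap ℝ (fun _ : Fin D => (Fin D → ℝ)) ℝ :=
  MultilinearMap.mkContinuous
    (Matrix.detRowAlternating (R := ℝ) (n := Fin D)).toMultilinearMap
    (Nat.factorial D) (by
      intro m
      have h1 : (Matrix.of m).det = ∑ σ : Equiv.Perm (Fin D),
          ((Equiv.Perm.sign σ : ℤ) : ℝ) * ∏ i, m (σ i) i := Matrix.det_apply' _
      show ‖(Matrix.of m).det‖ ≤ _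
      rw [h1, Real.norm_eq_abs]
      calc |∑ σ : Equiv.Perm (Fin D), ((Equiv.Perm.sign σ : ℤ) : ℝ) * ∏ i, m (σ i) i|
          ≤ ∑ σ : Equiv.Perm (Fin D), |((Equiv.Perm.sign σ : ℤ) : ℝ) * ∏ i, m (σ i) i| :=
            Finset.abs_sum_le_sum_abs _ _
        _ ≤ ∑ _σ : Equiv.Perm (Fin D), ∏ i, ‖m i‖ := by
            apply Finset.sum_le_sum
            intro σ _
            have hs : |((Equiv.Perm.sign σ : ℤ) : ℝ)| = 1 := by
              rcases Int.units_eq_one_or (Equiv.Perm.sign σ) with h | h <;> rw [h] <;> norm_num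
            rw [abs_mul, hs, one_mul]
            calc |∏ i, m (σ i) i| ≤ ∏ i, |m (σ i) i| := Finset.abs_prod _ _ |>.le
              _ ≤ ∏ i, ‖m (σ i)‖ := by
                  apply Finset.prod_le_prod (fun _ _ => abs_nonneg _)
                  intro i _
                  exact norm_le_pi_norm (m (σ i)) i
              _ = ∏ i, ‖m i‖ := Equiv.prod_comp σ (fun i => ‖m i‖)
        _ = (Nat.factorial D) * ∏ i, ‖m i‖ := by
            rw [Finset.sum_const, nsmul_eq_mul]
            congr 1
            simp [Fintype.card_perm])

lemma detCML_apply (D : ℕ) (m : Fin D → Fin D → ℝ) : detCML D m = (Matrix.of m).det := rfl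

lemma sum_det_updateRow (D : ℕ) (A H : Matrix (Fin D) (Fin D) ℝ) :
    ∑ i, (A.updateRow i (H i)).det = Matrix.trace (A.adjugate * H) := by
  have h1 : ∀ i, (A.updateRow i (H i)).det = ∑ j, H i j * A.adjugate j i := by
    intro i
    rw [← Matrix.cramer_transpose_apply]
    have : H i = ∑ j, H i j • (Pi.single j (1 : ℝ) : Fin D → ℝ) := by
      ext k
      simp [Pi.single_apply]
    rw [this]
    rw [map_sum]
    simp only [_root_.map_smul]
    rw [Finset.sum_apply]
    apply Finset.sum_congr rfl
    intro j _
    rw [Pi.smul_apply, smul_eq_mul, Matrix.adjugate_def, ← this]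
    rfl
  simp only [h1, Matrix.trace, Matrix.diag, Matrix.mul_apply]
  rw [Finset.sum_comm]
  congr 1; ext j; congr 1; ext i; ring

lemma euclid_decomp (D : ℕ) (v : EuclideanSpace ℝ (Fin D)) :
    v = ∑ i, v i • EuclideanSpace.single i (1:ℝ) := by
  ext j
  rw [WithLp.ofLp_sum, Finset.sum_apply]
  simp [EuclideanSpace.single_apply]

lemma gradient_coord (D : ℕ) (f : EuclideanSpace ℝ (Fin D) → ℝ) (x : EuclideanSpace ℝ (Fin D))
    (i : Fin D) : gradient f x i = fderiv ℝ f x (EuclideanSpace.single i 1) := by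
  have h : gradient f x i = inner (𝕜 := ℝ) (gradient f x) (EuclideanSpace.single i 1) := by
    rw [EuclideanSpace.inner_single_right]; simp
  rw [h, gradient, InnerProductSpace.toDual_symm_apply]

lemma fderiv_apply_decomp (D : ℕ) (φ : EuclideanSpace ℝ (Fin D) → ℝ)
    (p u : EuclideanSpace ℝ (Fin D)) :
    fderiv ℝ φ p u = ∑ a, u a * fderiv ℝ φ p (EuclideanSpace.single a 1) := by
  conv_lhs => rw [euclid_decomp D u]
  rw [map_sum]
  simp only [_root_.map_smul, smul_eq_mul]

lemma fderiv_coord (D : ℕ) {F : EuclideanSpace ℝ (Fin D) → EuclideanSpace ℝ (Fin D)}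
    {x : EuclideanSpace ℝ (Fin D)} (hF : DifferentiableAt ℝ F x)
    (v : EuclideanSpace ℝ (Fin D)) (i : Fin D) :
    fderiv ℝ F x v i = fderiv ℝ (fun y => F y i) x v := by
  have h := ((EuclideanSpace.proj (𝕜 := ℝ) i).hasFDerivAt.comp x hF.hasFDerivAt).fderiv
  rw [show (fun y => F y i) = (EuclideanSpace.proj (𝕜 := ℝ) i) ∘ F from rfl, h]
  rfl

lemma jac_entry_contDiff (D : ℕ) {F : EuclideanSpace ℝ (Fin D) → EuclideanSpace ℝ (Fin D)}
    (hF : ContDiff ℝ 2 F) (a b : Fin D) :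
    ContDiff ℝ 1 (fun y => jacMatrix D F y a b) := by
  have hc : ContDiff ℝ 2 (fun y => F y a) := (EuclideanSpace.proj (𝕜 := ℝ) a).contDiff.comp hF
  have h1 : ContDiff ℝ 1 (fderiv ℝ (fun y => F y a)) := hc.fderiv_right (by norm_num)
  exact h1.clm_apply contDiff_const

lemma jac_mul (D : ℕ) {F Finv : EuclideanSpace ℝ (Fin D) → EuclideanSpace ℝ (Fin D)}
    (hF : ContDiff ℝ 2 F) (hFinv : ContDiff ℝ 2 Finv)
    (hleft : ∀ x, Finv (F x) = x) (x : EuclideanSpace ℝ (Fin D)) :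
    jacMatrix D Finv (F x) * jacMatrix D F x = 1 := by
  ext i j
  have hFd : DifferentiableAt ℝ F x := (hF.differentiable (by norm_num)).differentiableAt
  have hFinvd : DifferentiableAt ℝ (fun y => Finv y i) (F x) :=
    (((EuclideanSpace.proj (𝕜 := ℝ) i).contDiff.comp hFinv).differentiable
      (by norm_num)).differentiableAt
  have hcomp : (fun y => Finv (F y) i) = fun y : EuclideanSpace ℝ (Fin D) => y i := by
    funext y; rw [hleft]
  have h1 : fderiv ℝ (fun y => Finv (F y) i) x (EuclideanSpace.single j 1)
      = (1 : Matrix (Fin D) (Fin D) ℝ) i j := by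
    rw [hcomp]
    have hp : fderiv ℝ (fun y : EuclideanSpace ℝ (Fin D) => y i) x
        = EuclideanSpace.proj (𝕜 := ℝ) i := (EuclideanSpace.proj (𝕜 := ℝ) i).fderiv
    rw [hp]
    have h2 : EuclideanSpace.proj (𝕜 := ℝ) i (EuclideanSpace.single j 1)
        = EuclideanSpace.single j (1:ℝ) i := rfl
    rw [h2]
    simp [EuclideanSpace.single_apply, Matrix.one_apply, eq_comm]
  have h2 : fderiv ℝ (fun y => Finv (F y) i) x (EuclideanSpace.single j 1)
      = ∑ a, jacMatrix D F x a j * jacMatrix D Finv (F x) i a := by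
    rw [show (fun y => Finv (F y) i) = (fun y => Finv y i) ∘ F from rfl,
      fderiv_comp x hFinvd hFd, ContinuousLinearMap.comp_apply,
      fderiv_apply_decomp D (fun y => Finv y i) (F x) (fderiv ℝ F x (EuclideanSpace.single j 1))]
    apply Finset.sum_congr rfl
    intro a _
    rw [fderiv_coord D hFd]
    rfl
  rw [Matrix.mul_apply]
  rw [← h1, h2]
  apply Finset.sum_congr rfl
  intro a _
  ring

lemma hasFDerivAt_detjac (D : ℕ) {F : EuclideanSpace ℝ (Fin D) → EuclideanSpace ℝ (Fin D)}
    (hF : ContDiff ℝ 2 F) (x : EuclideanSpace ℝ (Fin D)) :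
    ∃ L : EuclideanSpace ℝ (Fin D) →L[ℝ] ℝ,
      HasFDerivAt (fun y => (jacMatrix D F y).det) L x ∧
      ∀ j, L (EuclideanSpace.single j 1) =
        Matrix.trace ((jacMatrix D F x).adjugate * pderivMatrix D (jacMatrix D F) j x) := by
  set A : EuclideanSpace ℝ (Fin D) → (Fin D → Fin D → ℝ) := fun y => jacMatrix D F y with hA
  set Lmat : EuclideanSpace ℝ (Fin D) →L[ℝ] (Fin D → Fin D → ℝ) :=
    ContinuousLinearMap.pi (fun a => ContinuousLinearMap.pi (fun b =>
      fderiv ℝ (fun y => jacMatrix D F y a b) x)) with hLmat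
  have hAd : HasFDerivAt A Lmat x := by
    rw [hLmat]
    apply hasFDerivAt_pi.2
    intro a
    apply hasFDerivAt_pi.2
    intro b
    exact (((jac_entry_contDiff D hF a b).differentiable one_ne_zero) x).hasFDerivAt
  refine ⟨((detCML D).linearDeriv (A x)).comp Lmat, ?_, ?_⟩
  · have hfun : (fun y => (jacMatrix D F y).det) = ⇑(detCML D) ∘ A := by
      funext y
      rw [Function.comp_apply, detCML_apply]
      rfl
    rw [hfun]
    exact ((detCML D).hasFDerivAt (A x)).comp x hAd
  · intro j
    rw [ContinuousLinearMap.comp_apply, ContinuousMultilinearMap.linearDeriv_apply]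
    have hLm : Lmat (EuclideanSpace.single j 1)
        = fun a b => pderivMatrix D (jacMatrix D F) j x a b := rfl
    rw [hLm, ← sum_det_updateRow]
    apply Finset.sum_congr rfl
    intro i _
    rw [detCML_apply]
    rfl

/-- **Score component recursion.** -/
theorem statement8 (D d : ℕ) (hd : 1 ≤ d) (hdD : d ≤ D)
    (F Finv : EuclideanSpace ℝ (Fin D) → EuclideanSpace ℝ (Fin D))
    (hF : ContDiff ℝ 2 F) (hFinv : ContDiff ℝ 2 Finv)
    (hleft : ∀ x, Finv (F x) = x) (hright : ∀ y, F (Finv y) = y)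
    (ρ : EuclideanSpace ℝ (Fin D) → ℝ) (hρpos : ∀ x, 0 < ρ x) (hρ : ContDiff ℝ 1 ρ)
    (ρTilde : EuclideanSpace ℝ (Fin D) → ℝ)
    (hρTilde : ∀ y, ρTilde y = ρ (Finv y) / |(jacMatrix D F (Finv y)).det|)
    (x : EuclideanSpace ℝ (Fin D))
    (E E' : Matrix (Fin D) (Fin d) ℝ) (R : Matrix (Fin d) (Fin d) ℝ)
    (hR : IsUnit R.det)
    (hQR : jacMatrix D F x * E = E' * R) :
    Matrix.mulVec E'ᵀ (fun i => gradient (fun y => Real.log (ρTilde y)) (F x) i)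
      = Matrix.mulVec (R⁻¹)ᵀ (Matrix.mulVec Eᵀ
          (fun i => gradient (fun y => Real.log (ρ y)) x i
            - Matrix.trace ((jacMatrix D F x)⁻¹ * pderivMatrix D (jacMatrix D F) i x))) := by
  have hFd : Differentiable ℝ F := hF.differentiable (by norm_num)
  have hFinvd : Differentiable ℝ Finv := hFinv.differentiable (by norm_num)
  have hρd : Differentiable ℝ ρ := hρ.differentiable one_ne_zero
  have hdetU : ∀ z, IsUnit (jacMatrix D F z).det := fun z =>
    Matrix.isUnit_det_of_left_inverse (jac_mul D hF hFinv hleft z)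
  have hdetne : ∀ z, (jacMatrix D F z).det ≠ 0 := fun z => (hdetU z).ne_zero
  obtain ⟨Ldet, hLdet, hLdetval⟩ := hasFDerivAt_detjac D hF x
  set h : EuclideanSpace ℝ (Fin D) → ℝ :=
    fun z => Real.log (ρ z) - Real.log ((jacMatrix D F z).det) with hh_def
  have hlogρ : HasFDerivAt (fun z => Real.log (ρ z)) ((ρ x)⁻¹ • fderiv ℝ ρ x) x :=
    (Real.hasDerivAt_log (ne_of_gt (hρpos x))).comp_hasFDerivAt x (hρd x).hasFDerivAt
  have hlogdet : HasFDerivAt (fun z => Real.log ((jacMatrix D F z).det))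
      (((jacMatrix D F x).det)⁻¹ • Ldet) x :=
    by have := (Real.hasDerivAt_log (hdetne x)).comp_hasFDerivAt x hLdet; exact this
  have hh : HasFDerivAt h ((ρ x)⁻¹ • fderiv ℝ ρ x - ((jacMatrix D F x).det)⁻¹ • Ldet) x :=
    hlogρ.sub hlogdet
  set g : EuclideanSpace ℝ (Fin D) → ℝ := fun y => Real.log (ρTilde y) with hg_def
  have hgeq : g = h ∘ Finv := by
    funext y
    show Real.log (ρTilde y) = h (Finv y)
    rw [hρTilde y, Real.log_div (ne_of_gt (hρpos _)) (abs_ne_zero.2 (hdetne _)), Real.log_abs]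
  have hgdiff : DifferentiableAt ℝ g (F x) := by
    rw [hgeq]
    have hhd : DifferentiableAt ℝ h (Finv (F x)) := by
      rw [hleft]; exact hh.differentiableAt
    exact hhd.comp _ (hFinvd (F x))
  have hgF : (fun z => g (F z)) = h := by
    funext z
    rw [hgeq]
    show h (Finv (F z)) = h z
    rw [hleft]
  have key : ∀ j, ∑ i, jacMatrix D F x i j * gradient g (F x) i
      = gradient (fun y => Real.log (ρ y)) x j
        - Matrix.trace ((jacMatrix D F x)⁻¹ * pderivMatrix D (jacMatrix D F) j x) := by
    intro j
    have hchain : fderiv ℝ (fun z => g (F z)) x (EuclideanSpace.single j 1)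
        = fderiv ℝ g (F x) (fderiv ℝ F x (EuclideanSpace.single j 1)) := by
      rw [show (fun z => g (F z)) = g ∘ F from rfl, fderiv_comp x hgdiff (hFd x)]
      rfl
    have hLHS : fderiv ℝ (fun z => g (F z)) x (EuclideanSpace.single j 1)
        = ∑ i, jacMatrix D F x i j * gradient g (F x) i := by
      rw [hchain, fderiv_apply_decomp]
      apply Finset.sum_congr rfl
      intro i _
      rw [fderiv_coord D (hFd x), gradient_coord]
      rfl
    have hRHS : fderiv ℝ (fun z => g (F z)) x (EuclideanSpace.single j 1)
        = gradient (fun y => Real.log (ρ y)) x j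
          - Matrix.trace ((jacMatrix D F x)⁻¹ * pderivMatrix D (jacMatrix D F) j x) := by
      rw [hgF, hh.fderiv, gradient_coord, hlogρ.fderiv]
      simp only [ContinuousLinearMap.sub_apply, ContinuousLinearMap.smul_apply, smul_eq_mul]
      congr 1
      rw [hLdetval j, Matrix.inv_def, Ring.inverse_eq_inv, smul_mul_assoc,
        Matrix.trace_smul, smul_eq_mul]
    rw [← hLHS, hRHS]
  have hT : Matrix.mulVec (jacMatrix D F x)ᵀ (fun i => gradient g (F x) i)
      = fun j => gradient (fun y => Real.log (ρ y)) x j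
          - Matrix.trace ((jacMatrix D F x)⁻¹ * pderivMatrix D (jacMatrix D F) j x) := by
    funext j
    simp only [Matrix.mulVec, dotProduct, Matrix.transpose_apply]
    exact key j
  rw [← hT, Matrix.mulVec_mulVec, Matrix.mulVec_mulVec]
  congr 1
  have hE' : jacMatrix D F x * E * R⁻¹ = E' := by
    rw [hQR, Matrix.mul_assoc, Matrix.mul_nonsing_inv R hR, Matrix.mul_one]
  rw [Matrix.mul_assoc, ← Matrix.transpose_mul, ← Matrix.transpose_mul, hE']
end

section
/- (Core estimate in the proof of the alignment theorem.) Let d, τ, t* ∈ ℕ with t* ≤ τ, let δ ∈ (0,1), Δt > 0 and c, c₁, B ≥ 0. Let R_0, …, R_{τ−1} be invertible real d × d matrices, w_0, …, w_{τ−1} ∈ ℝ^{1×d}, and define p_0 := 0, p_{t+1} := (p_t − w_t) R_t⁻¹. Assume: (a) for every t < t*, ‖w_t‖ ≤ c·Δt and ‖(R_{τ−1} ⋯ R_t)⁻¹‖ ≤ B, where ‖·‖ on matrices is the operator norm; and (b) for every t with t* ≤ t < τ, ‖w_t (R_{τ−1} ⋯ R_t)⁻¹‖ ≤ c₁ ·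 Δt · δ^{1/(τ−t)} · (1+δ)^{t−τ}. Then ‖p_τ‖ ≤ Δt · ( c · t* · B + c₁ / δ ). -/
open scoped Matrix.Norms.L2Operator

/-- The decreasing-index product `R_{τ-1} · R_{τ-2} ⋯ R_t` of matrices
(the identity when `t ≥ τ`). -/
noncomputable def revProd (d : ℕ) (R : ℕ → Matrix (Fin d) (Fin d) ℝ) (τ t : ℕ) :
    Matrix (Fin d) (Fin d) ℝ :=
  ((List.range (τ - t)).map fun k => R (τ - 1 - k)).prod

lemma revProd_succ (d : ℕ) (R : ℕ → Matrix (Fin d) (Fin d) ℝ) (s t : ℕ) (hts : t ≤ s) :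
    revProd d R (s + 1) t = R s * revProd d R s t := by
  unfold revProd
  have h1 : s + 1 - t = (s - t) + 1 := by omega
  rw [h1, List.range_succ_eq_map, List.map_cons, List.map_map, List.prod_cons]
  have h0 : s + 1 - 1 - 0 = s := by omega
  rw [h0]
  have h2 : ((fun k => R (s + 1 - 1 - k)) ∘ Nat.succ) = fun k => R (s - 1 - k) := by
    funext k
    simp only [Function.comp_apply]
    have : s + 1 - 1 - Nat.succ k = s - 1 - k := by omega
    rw [this]
  rw [h2]

lemma revProd_self (d : ℕ) (R : ℕ → Matrix (Fin d) (Fin d) ℝ) (s : ℕ) :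
    revProd d R (s + 1) s = R s := by
  unfold revProd
  norm_num [List.range_succ]

lemma geom_aux (r : ℝ) (h0 : 0 ≤ r) (h1 : r < 1) (n : ℕ) :
    ∑ k ∈ Finset.range n, r ^ (k + 1) ≤ r / (1 - r) := by
  have h1r : (0 : ℝ) < 1 - r := by linarith
  have hmul : ∑ k ∈ Finset.range n, r ^ (k + 1) = r * ∑ k ∈ Finset.range n, r ^ k := by
    rw [Finset.mul_sum]
    exact Finset.sum_congr rfl fun k _ => by ring
  rw [hmul, div_eq_mul_inv]
  apply mul_le_mul_of_nonneg_left _ h0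
  rw [geom_sum_eq (ne_of_lt h1)]
  have heq : (r ^ n - 1) / (r - 1) = (1 - r ^ n) / (1 - r) := by
    rw [div_eq_div_iff (sub_ne_zero.mpr (ne_of_lt h1)) (ne_of_gt h1r)]
    ring
  rw [heq, div_le_iff₀ h1r, inv_mul_cancel₀ (ne_of_gt h1r)]
  nlinarith [pow_nonneg h0 n]

/-- **Core estimate in the proof of the alignment theorem.** Row vectors are
modeled as `1 × d` matrices, and all norms are the operator norms induced by the Euclidean
norm. Under the recursion `p_0 = 0`, `p_{t+1} = (p_t − w_t) R_t⁻¹`, and the bounds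
(a) `‖w_t‖ ≤ c Δt` and `‖(R_{τ-1} ⋯ R_t)⁻¹‖ ≤ B` for `t < t*`, and
(b) `‖w_t (R_{τ-1} ⋯ R_t)⁻¹‖ ≤ c₁ Δt δ^{1/(τ−t)} (1+δ)^{t−τ}` for `t* ≤ t < τ`,
one has `‖p_τ‖ ≤ Δt (c t* B + c₁/δ)`. -/
theorem statement11 (d τ tstar : ℕ) (htstar : tstar ≤ τ)
    (δ : ℝ) (hδ0 : 0 < δ) (hδ1 : δ < 1) (Δt : ℝ) (hΔt : 0 < Δt)
    (c c₁ B : ℝ) (hc : 0 ≤ c) (hc₁ : 0 ≤ c₁) (hB : 0 ≤ B)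
    (R : ℕ → Matrix (Fin d) (Fin d) ℝ) (hR : ∀ t < τ, IsUnit (R t).det)
    (w : ℕ → Matrix (Fin 1) (Fin d) ℝ)
    (p : ℕ → Matrix (Fin 1) (Fin d) ℝ)
    (hp0 : p 0 = 0)
    (hpstep : ∀ t < τ, p (t + 1) = (p t - w t) * (R t)⁻¹)
    (ha : ∀ t < tstar, ‖w t‖ ≤ c * Δt ∧ ‖(revProd d R τ t)⁻¹‖ ≤ B)
    (hb : ∀ t, tstar ≤ t → t < τ →
      ‖w t * (revProd d R τ t)⁻¹‖
        ≤ c₁ * Δt * δ ^ ((1 : ℝ) / ((τ : ℝ) - (t : ℝ))) * (1 + δ) ^ ((t : ℝ) - (τ : ℝ))) :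
    ‖p τ‖ ≤ Δt * (c * tstar * B + c₁ / δ) := by
  -- closed form for p
  have key : ∀ s, s ≤ τ →
      p s = -(∑ t ∈ Finset.range s, w t * (revProd d R s t)⁻¹) := by
    intro s
    induction s with
    | zero => intro _; simp [hp0]
    | succ n ih =>
      intro hn
      have hnτ : n < τ := hn
      rw [hpstep n hnτ, ih (le_of_lt hnτ), Finset.sum_range_succ, revProd_self]
      have hs : ∀ t ∈ Finset.range n,
          w t * (revProd d R (n + 1) t)⁻¹ = (w t * (revProd d R n t)⁻¹) * (R n)⁻¹ := by
        intro t ht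
        rw [revProd_succ d R n t (le_of_lt (Finset.mem_range.mp ht)),
          Matrix.mul_inv_rev, ← Matrix.mul_assoc]
      rw [Finset.sum_congr rfl hs]
      rw [Matrix.sub_mul, Matrix.neg_mul, Matrix.sum_mul, neg_add, ← sub_eq_add_neg]
  rw [key τ le_rfl, norm_neg]
  -- split the sum
  rw [Finset.range_eq_Ico, ← Finset.sum_Ico_consecutive _ (Nat.zero_le tstar) htstar]
  refine le_trans (norm_add_le _ _) ?_
  have bound1 : ‖∑ t ∈ Finset.Ico 0 tstar, w t * (revProd d R τ t)⁻¹‖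
      ≤ (tstar : ℝ) * (c * Δt * B) := by
    refine le_trans (norm_sum_le _ _) ?_
    have hterm : ∀ t ∈ Finset.Ico 0 tstar, ‖w t * (revProd d R τ t)⁻¹‖ ≤ c * Δt * B := by
      intro t ht
      simp only [Finset.mem_Ico] at ht
      obtain ⟨h1, h2⟩ := ha t ht.2
      calc ‖w t * (revProd d R τ t)⁻¹‖ ≤ ‖w t‖ * ‖(revProd d R τ t)⁻¹‖ :=
            Matrix.l2_opNorm_mul _ _
        _ ≤ (c * Δt) * B := by
            apply mul_le_mul h1 h2 (norm_nonneg _)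
            positivity
    refine le_trans (Finset.sum_le_sum hterm) ?_
    rw [Finset.sum_const, Nat.card_Ico, Nat.sub_zero, nsmul_eq_mul]
  have bound2 : ‖∑ t ∈ Finset.Ico tstar τ, w t * (revProd d R τ t)⁻¹‖
      ≤ c₁ * Δt * (1 / δ) := by
    refine le_trans (norm_sum_le _ _) ?_
    have step : ∀ t ∈ Finset.Ico tstar τ, ‖w t * (revProd d R τ t)⁻¹‖
        ≤ c₁ * Δt * ((1 + δ)⁻¹) ^ (τ - t) := by
      intro t ht
      simp only [Finset.mem_Ico] at ht
      refine le_trans (hb t ht.1 ht.2) ?_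
      have htτ : (t : ℝ) < τ := by exact_mod_cast ht.2
      have hrpow1 : δ ^ ((1 : ℝ) / ((τ : ℝ) - (t : ℝ))) ≤ 1 := by
        apply Real.rpow_le_one hδ0.le hδ1.le
        have h : (0 : ℝ) < (τ : ℝ) - (t : ℝ) := by linarith
        exact div_nonneg zero_le_one h.le
      have hrpow2 : (1 + δ) ^ ((t : ℝ) - (τ : ℝ)) = ((1 + δ)⁻¹) ^ (τ - t) := by
        rw [inv_pow, ← Real.rpow_natCast (1 + δ) (τ - t),
          ← Real.rpow_neg (by linarith : (0 : ℝ) ≤ 1 + δ)]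
        congr 1
        rw [Nat.cast_sub ht.2.le]
        ring
      rw [hrpow2]
      calc c₁ * Δt * δ ^ ((1 : ℝ) / ((τ : ℝ) - (t : ℝ))) * ((1 + δ)⁻¹) ^ (τ - t)
          ≤ c₁ * Δt * 1 * ((1 + δ)⁻¹) ^ (τ - t) := by gcongr
        _ = c₁ * Δt * ((1 + δ)⁻¹) ^ (τ - t) := by ring
    refine le_trans (Finset.sum_le_sum step) ?_
    rw [← Finset.mul_sum]
    have geom : ∑ t ∈ Finset.Ico tstar τ, ((1 + δ)⁻¹) ^ (τ - t) ≤ 1 / δ := by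
      have hsum : ∑ t ∈ Finset.Ico tstar τ, ((1 + δ)⁻¹ : ℝ) ^ (τ - t)
          = ∑ k ∈ Finset.range (τ - tstar), ((1 + δ)⁻¹ : ℝ) ^ (k + 1) := by
        rw [Finset.sum_Ico_eq_sum_range]
        rw [← Finset.sum_range_reflect (fun k => ((1 + δ)⁻¹ : ℝ) ^ (k + 1)) (τ - tstar)]
        apply Finset.sum_congr rfl
        intro k hk
        simp only [Finset.mem_range] at hk
        congr 1
        omega
      rw [hsum]
      have h0r : (0 : ℝ) ≤ (1 + δ)⁻¹ := by positivity
      have h1r : ((1 + δ)⁻¹ : ℝ) < 1 := by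
        rw [inv_lt_one_iff₀]; right; linarith
      refine le_trans (geom_aux (1 + δ)⁻¹ h0r h1r (τ - tstar)) (le_of_eq ?_)
      have h1δ : (0 : ℝ) < 1 + δ := by linarith
      rw [eq_div_iff hδ0.ne']
      field_simp
      rw [add_sub_cancel_left, div_self hδ0.ne']
    exact mul_le_mul_of_nonneg_left geom (by positivity)
  have hring : Δt * (c * tstar * B + c₁ / δ)
      = (tstar : ℝ) * (c * Δt * B) + c₁ * Δt * (1 / δ) := by ring
  rw [hring]
  exact add_le_add bound1 bound2
end
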